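/- arXiv:1309.0797 — 8 statements merged into one kernel-verified Lean document; each statement's English description precedes it below -/
import Mathlib

section
/- Let A be a bounded self-adjoint operator on a complex Hilbert space H, and let a, b, c > 0 satisfy ac > b(a+b+3c). Suppose u, v ∈ H satisfy ⟨Au, u⟩ ≥ a‖u‖² and ‖Av‖ ≤ b‖v‖. If u ≠ 0 or v ≠ 0, then Re⟨A(u+v), u+v⟩ + c‖u+v‖² > 0. -/
open InnerProductSpace

set_option maxHeartbeats 1000000 in
/-- for a bounded self-adjoint operator `A` on a complex Hilbert space,
constants `a, b, c > 0` with `a*c > b*(a+b+3c)`, vectors `u, v` with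
`⟨Au,u⟩ ≥ a‖u‖²` and `‖Av‖ ≤ b‖v‖`, not both zero, one has
`Re⟨A(u+v), u+v⟩ + c‖u+v‖² > 0`. -/
theorem stmt1 {H : Type*} [NormedAddCommGroup H] [InnerProductSpace ℂ H] [CompleteSpace H]
    (A : H →L[ℂ] H) (hA : IsSelfAdjoint A)
    (a b c : ℝ) (ha : 0 < a) (hb : 0 < b) (hc : 0 < c)
    (habc : a * c > b * (a + b + 3 * c))
    (u v : H)
    (hu : a * ‖u‖ ^ 2 ≤ (inner ℂ (A u) u : ℂ).re)
    (hv : ‖A v‖ ≤ b * ‖v‖)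
    (hne : u ≠ 0 ∨ v ≠ 0) :
    0 < (inner ℂ (A (u + v)) (u + v) : ℂ).re + c * ‖u + v‖ ^ 2 := by
  have hsym := ContinuousLinearMap.isSelfAdjoint_iff_isSymmetric.mp hA
  set x := ‖u‖ with hxdef
  set y := ‖v‖ with hydef
  have hx : 0 ≤ x := norm_nonneg u
  have hy : 0 ≤ y := norm_nonneg v
  have hxy : 0 < x ∨ 0 < y := by
    rcases hne with h | h
    · exact Or.inl (norm_pos_iff.mpr h)
    · exact Or.inr (norm_pos_iff.mpr h)
  -- norm of the sum
  have hn1 : x ≤ ‖u + v‖ + y := by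
    have : ‖u + v - v‖ ≤ ‖u + v‖ + ‖v‖ := norm_sub_le _ _
    simpa using this
  have hn2 : y ≤ ‖u + v‖ + x := by
    have : ‖u + v - u‖ ≤ ‖u + v‖ + ‖u‖ := norm_sub_le _ _
    simpa using this
  have hnn : (0:ℝ) ≤ ‖u + v‖ := norm_nonneg _
  have hsq : (x - y) ^ 2 ≤ ‖u + v‖ ^ 2 := by nlinarith
  -- expand the inner product
  have h2 : (inner ℂ (A u) v : ℂ).re = (inner ℂ (A v) u : ℂ).re := by
    have h := hsym u v
    rw [show ((A : H →ₗ[ℂ] H) u) = A u from rfl, show ((A : H →ₗ[ℂ] H) v) = A v from rfl] at h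
    rw [h, ← inner_conj_symm (A v) u, Complex.conj_re]
  have key : (inner ℂ (A (u + v)) (u + v) : ℂ).re =
      (inner ℂ (A u) u : ℂ).re + 2 * (inner ℂ (A v) u : ℂ).re + (inner ℂ (A v) v : ℂ).re := by
    rw [map_add, inner_add_left, inner_add_right, inner_add_right]
    simp [Complex.add_re, h2]
    ring
  -- cross term bound
  have hcross : |(inner ℂ (A v) u : ℂ).re| ≤ b * y * x := by
    have h3 : |(inner ℂ (A v) u : ℂ).re| ≤ ‖(inner ℂ (A v) u : ℂ)‖ := Complex.abs_re_le_norm _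
    have h4 : ‖(inner ℂ (A v) u : ℂ)‖ ≤ ‖A v‖ * ‖u‖ := norm_inner_le_norm _ _
    have h5 : ‖A v‖ * ‖u‖ ≤ (b * y) * x := by
      apply mul_le_mul_of_nonneg_right hv hx
    linarith
  have hdiag : -(b * y * y) ≤ (inner ℂ (A v) v : ℂ).re := by
    have h3 : |(inner ℂ (A v) v : ℂ).re| ≤ ‖(inner ℂ (A v) v : ℂ)‖ := Complex.abs_re_le_norm _
    have h4 : ‖(inner ℂ (A v) v : ℂ)‖ ≤ ‖A v‖ * ‖v‖ := norm_inner_le_norm _ _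
    have h5 : ‖A v‖ * ‖v‖ ≤ (b * y) * y := mul_le_mul_of_nonneg_right hv hy
    have := abs_le.mp (le_trans h3 (le_trans h4 h5))
    linarith [this.1]
  have hcross' := abs_le.mp hcross
  rw [key]
  -- reduce to a quadratic form inequality
  have hcb : b < c := by nlinarith
  have hD : 0 < a * c - b * (a + b + 3 * c) := by linarith
  have quad : 0 < (a + c) * x ^ 2 - 2 * (b + c) * (x * y) + (c - b) * y ^ 2 := by
    rcases lt_or_eq_of_le hy with hypos | hy0
    · nlinarith [sq_nonneg ((a + c) * x - (b + c) * y), mul_pos hD (mul_pos hypos hypos)]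
    · have hxpos : 0 < x := by
        rcases hxy with h | h
        · exact h
        · exfalso; rw [← hy0] at h; exact lt_irrefl 0 h
      rw [← hy0]
      nlinarith [mul_pos hxpos hxpos]
  nlinarith [quad, mul_le_mul_of_nonneg_left hsq hc.le, hcross'.1, hdiag, hu]
end

section
/- Let T be a family of bounded self-adjoint operators T(λ) on a Hilbert space H, λ in an interval Δ ⊂ ℝ, whose forms t(λ)(x) = ⟨T(λ)x,x⟩ satisfy Assumption (A3) (monotone decreasing through zero). Let λ₁ ≤ λ₂ ≤ ⋯ ≤ λ_m be eigenvalues of T such that for each maximal group of k coinciding eigenvalues λ_i = ⋯ = λ_{i+k−1}, the kernel of T(λ_i) has dimension at least k. Then there exist linearly independent vectors u₁, …, u_m in H such that T(λⱼ)uⱼ = 0 for each j. -/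
private lemma stmt7_expand {H : Type*} [NormedAddCommGroup H] [InnerProductSpace ℂ H]
    (A : H →L[ℂ] H) (w y : H) (s : ℝ) :
    (inner ℂ (A (w + (s:ℂ) • y)) (w + (s:ℂ) • y) : ℂ).re
      = (inner ℂ (A w) w : ℂ).re
        + s * ((inner ℂ (A y) w : ℂ).re + (inner ℂ (A w) y : ℂ).re)
        + s^2 * (inner ℂ (A y) y : ℂ).re := by
  simp only [map_add, map_smul, inner_add_left, inner_add_right, inner_smul_left,
    inner_smul_right, Complex.conj_ofReal, Complex.add_re, Complex.re_ofReal_mul]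
  ring

/-- If `A` is self-adjoint and `A y = 0`, the form of `w + s y` equals that of `w`. -/
private lemma stmt7_cross {H : Type*} [NormedAddCommGroup H] [InnerProductSpace ℂ H]
    [CompleteSpace H] (A : H →L[ℂ] H) (hA : IsSelfAdjoint A) {y : H} (hy : A y = 0)
    (w : H) (s : ℝ) :
    (inner ℂ (A (w + (s:ℂ) • y)) (w + (s:ℂ) • y) : ℂ).re = (inner ℂ (A w) w : ℂ).re := by
  have hsym := ContinuousLinearMap.isSelfAdjoint_iff_isSymmetric.mp hA
  have h1 : (inner ℂ (A y) w : ℂ) = 0 := by rw [hy, inner_zero_left]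
  have h2 : (inner ℂ (A w) y : ℂ) = 0 := by
    have h2' : (inner ℂ (A w) y : ℂ) = inner ℂ w (A y) := hsym w y
    rw [h2', hy, inner_zero_right]
  rw [stmt7_expand, h1, h2]
  have h3 : (inner ℂ (A y) y : ℂ) = 0 := by rw [hy, inner_zero_left]
  rw [h3]
  simp

private lemma stmt7_keyQ {H : Type*} [NormedAddCommGroup H] [InnerProductSpace ℂ H]
    [CompleteSpace H]
    (Δ : Set ℝ) (T : ℝ → (H →L[ℂ] H)) (hsa : ∀ lam ∈ Δ, IsSelfAdjoint (T lam))
    (hA3 : ∀ x : H, x ≠ 0 → ∀ lam₀ ∈ Δ, (inner ℂ (T lam₀ x) x : ℂ).re = 0 →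
      ∀ lam ∈ Δ, (lam < lam₀ → 0 < (inner ℂ (T lam x) x : ℂ).re) ∧
        (lam₀ < lam → (inner ℂ (T lam x) x : ℂ).re < 0)) :
    ∀ V : Finset ℝ, (∀ v ∈ V, v ∈ Δ) → ∀ x : ℝ → H, (∀ v ∈ V, T v (x v) = 0) →
      ∀ μ ∈ Δ, (∀ v ∈ V, v < μ) → (∑ v ∈ V, x v) ≠ 0 →
      (inner ℂ (T μ (∑ v ∈ V, x v)) (∑ v ∈ V, x v) : ℂ).re < 0 := by
  intro V
  induction V using Finset.induction_on_max with
  | empty => intro _ x _ μ _ _ hne; simp at hne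
  | insert β S hβmax IH =>
    intro hVΔ x hx μ hμΔ hlt hne
    have hβS : β ∉ S := fun h => lt_irrefl β (hβmax β h)
    have hβΔ : β ∈ Δ := hVΔ β (Finset.mem_insert_self _ _)
    have hβμ : β < μ := hlt β (Finset.mem_insert_self _ _)
    have hSΔ : ∀ v ∈ S, v ∈ Δ := fun v hv => hVΔ v (Finset.mem_insert_of_mem hv)
    have hxS : ∀ v ∈ S, T v (x v) = 0 := fun v hv => hx v (Finset.mem_insert_of_mem hv)
    have hxβ : T β (x β) = 0 := hx β (Finset.mem_insert_self _ _)
    rw [Finset.sum_insert hβS] at hne ⊢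
    set y := x β with hy
    set w' := ∑ v ∈ S, x v with hw'
    -- base fact: form of y at β is zero
    have hfyβ : (inner ℂ (T β y) y : ℂ).re = 0 := by rw [hxβ]; simp
    by_cases hyz : y = 0
    · rw [hyz, zero_add] at hne ⊢
      exact IH hSΔ x hxS μ hμΔ (fun v hv => hlt v (Finset.mem_insert_of_mem hv)) hne
    have hyneg : (inner ℂ (T μ y) y : ℂ).re < 0 :=
      ((hA3 y hyz β hβΔ hfyβ μ hμΔ).2 hβμ)
    by_cases hw'z : w' = 0
    · rw [hw'z, add_zero] at hne ⊢
      exact hyneg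
    -- main case
    have hw'neg : (inner ℂ (T β w') w' : ℂ).re < 0 :=
      IH hSΔ x hxS β hβΔ hβmax hw'z
    have hconst : ∀ s : ℝ,
        (inner ℂ (T β (w' + (s:ℂ) • y)) (w' + (s:ℂ) • y) : ℂ).re
          = (inner ℂ (T β w') w' : ℂ).re :=
      fun s => stmt7_cross (T β) (hsa β hβΔ) hxβ w' s
    by_contra hpos
    push_neg at hpos
    -- f s = c + b s + a s²
    set a := (inner ℂ (T μ y) y : ℂ).re with ha
    set b := ((inner ℂ (T μ y) w' : ℂ).re + (inner ℂ (T μ w') y : ℂ).re) with hb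
    set c := (inner ℂ (T μ w') w' : ℂ).re with hc
    set f : ℝ → ℝ := fun s => (inner ℂ (T μ (w' + (s:ℂ) • y)) (w' + (s:ℂ) • y) : ℂ).re with hf
    have hfeq : ∀ s, f s = c + s * b + s^2 * a := fun s => stmt7_expand (T μ) w' y s
    have hf1 : 0 ≤ f 1 := by
      have : w' + ((1:ℝ):ℂ) • y = y + w' := by push_cast; rw [one_smul]; exact add_comm _ _
      rw [hf]; simp only [this]; exact hpos
    set s₀ : ℝ := max 1 ((|b| + |c| + 1) / (-a)) with hs₀
    have h1s₀ : 1 ≤ s₀ := le_max_left _ _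
    have hfs₀ : f s₀ < 0 := by
      rw [hfeq]
      have h2 : (|b| + |c| + 1) / (-a) ≤ s₀ := le_max_right _ _
      have h3 : |b| + |c| + 1 ≤ s₀ * (-a) := by
        rw [div_le_iff₀ (by linarith)] at h2; linarith [h2]
      nlinarith [abs_nonneg b, abs_nonneg c, le_abs_self b, neg_abs_le b,
        le_abs_self c, neg_abs_le c, hyneg]
    have hmap : Continuous fun s : ℝ => w' + (s:ℂ) • y :=
      continuous_const.add (Complex.continuous_ofReal.smul continuous_const)
    have hcont : Continuous f :=
      Complex.continuous_re.comp (Continuous.inner ((T μ).continuous.comp hmap) hmap)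
    have hIVT : (0:ℝ) ∈ Set.Icc (f s₀) (f 1) := ⟨le_of_lt hfs₀, hf1⟩
    obtain ⟨s', hs'mem, hs'⟩ := intermediate_value_Icc' h1s₀ hcont.continuousOn hIVT
    set v := w' + ((s':ℝ):ℂ) • y with hv
    have hvne : v ≠ 0 := by
      intro h0
      have : (inner ℂ (T β v) v : ℂ).re = (inner ℂ (T β w') w' : ℂ).re := hconst s'
      rw [h0] at this
      simp at this
      exact absurd this.symm (ne_of_lt hw'neg)
    have hA3v := hA3 v hvne μ hμΔ hs' β hβΔ
    have : 0 < (inner ℂ (T β v) v : ℂ).re := hA3v.1 hβμ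
    rw [hconst s'] at this
    linarith

/-- Kernels at distinct points are independent. -/
private lemma stmt7_indep {H : Type*} [NormedAddCommGroup H] [InnerProductSpace ℂ H]
    [CompleteSpace H]
    (Δ : Set ℝ) (T : ℝ → (H →L[ℂ] H)) (hsa : ∀ lam ∈ Δ, IsSelfAdjoint (T lam))
    (hA3 : ∀ x : H, x ≠ 0 → ∀ lam₀ ∈ Δ, (inner ℂ (T lam₀ x) x : ℂ).re = 0 →
      ∀ lam ∈ Δ, (lam < lam₀ → 0 < (inner ℂ (T lam x) x : ℂ).re) ∧
        (lam₀ < lam → (inner ℂ (T lam x) x : ℂ).re < 0))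
    (V : Finset ℝ) (hVΔ : ∀ v ∈ V, v ∈ Δ) (x : ℝ → H)
    (hx : ∀ v ∈ V, T v (x v) = 0) (hsum : ∑ v ∈ V, x v = 0) :
    ∀ v ∈ V, x v = 0 := by
  by_contra hcon
  push_neg at hcon
  obtain ⟨v₀, hv₀V, hv₀⟩ := hcon
  classical
  set W : Finset ℝ := V.filter (fun v => x v ≠ 0) with hW
  have hWne : W.Nonempty := ⟨v₀, Finset.mem_filter.mpr ⟨hv₀V, hv₀⟩⟩
  set v' : ℝ := W.max' hWne with hv'
  have hv'W : v' ∈ W := W.max'_mem hWne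
  have hv'V : v' ∈ V := (Finset.mem_filter.mp hv'W).1
  have hxv' : x v' ≠ 0 := (Finset.mem_filter.mp hv'W).2
  -- split sum
  have hsplit := Finset.sum_filter_add_sum_filter_not V (fun v => v < v') x
  have htop : ∑ v ∈ V.filter (fun v => ¬ v < v'), x v = x v' := by
    apply Finset.sum_eq_single_of_mem v'
    · exact Finset.mem_filter.mpr ⟨hv'V, lt_irrefl v'⟩
    · intro v hv hvne
      obtain ⟨hvV, hnlt⟩ := Finset.mem_filter.mp hv
      by_contra hxv
      have hvW : v ∈ W := Finset.mem_filter.mpr ⟨hvV, hxv⟩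
      have := W.le_max' v hvW
      rcases lt_or_eq_of_le this with h | h
      · exact hnlt h
      · exact hvne h
  rw [htop, hsum] at hsplit
  have hw : ∑ v ∈ V.filter (fun v => v < v'), x v = -x v' := by
    have := hsplit
    linear_combination (norm := abel) this - hsum + hsum
  have hwne : ∑ v ∈ V.filter (fun v => v < v'), x v ≠ 0 := by
    rw [hw]; simpa using hxv'
  have hneg := stmt7_keyQ Δ T hsa hA3 (V.filter (fun v => v < v'))
    (fun v hv => hVΔ v (Finset.mem_filter.mp hv).1) x
    (fun v hv => hx v (Finset.mem_filter.mp hv).1) v' (hVΔ v' hv'V)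
    (fun v hv => (Finset.mem_filter.mp hv).2) hwne
  rw [hw] at hneg
  have : T v' (-x v') = 0 := by rw [map_neg, hx v' hv'V, neg_zero]
  rw [this] at hneg
  simp at hneg

/-- Lemma 2.13: if `T(λ)` are bounded self-adjoint operators satisfying
Assumption (A3) and `λ₁ ≤ ⋯ ≤ λ_m` are eigenvalues such that for each group of `k`
coinciding eigenvalues the kernel of the corresponding operator has dimension at
least `k`, then there are linearly independent eigenvectors `u₁, …, u_m`. -/
theorem stmt7 {H : Type*} [NormedAddCommGroup H] [InnerProductSpace ℂ H] [CompleteSpace H]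
    (Δ : Set ℝ) (hΔ : Δ.OrdConnected)
    (T : ℝ → (H →L[ℂ] H)) (hsa : ∀ lam ∈ Δ, IsSelfAdjoint (T lam))
    (hA3 : ∀ x : H, x ≠ 0 → ∀ lam₀ ∈ Δ, (inner ℂ (T lam₀ x) x : ℂ).re = 0 →
      ∀ lam ∈ Δ, (lam < lam₀ → 0 < (inner ℂ (T lam x) x : ℂ).re) ∧
        (lam₀ < lam → (inner ℂ (T lam x) x : ℂ).re < 0))
    (m : ℕ) (lam : Fin m → ℝ) (hmono : Monotone lam) (hlamΔ : ∀ j, lam j ∈ Δ)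
    (heig : ∀ j, ∃ x : H, x ≠ 0 ∧ T (lam j) x = 0)
    (hker : ∀ i : Fin m,
      ((Finset.univ.filter (fun j : Fin m => lam j = lam i)).card : Cardinal) ≤
        Module.rank ℂ (LinearMap.ker (T (lam i) : H →ₗ[ℂ] H))) :
    ∃ u : Fin m → H, LinearIndependent ℂ u ∧ ∀ j, T (lam j) (u j) = 0 := by
  classical
  -- selection of independent vectors in each kernel
  have hsel : ∀ v ∈ Finset.image lam Finset.univ,
      ∃ f : {j : Fin m // lam j = v} → H, LinearIndependent ℂ f ∧
        ∀ j, T v (f j) = 0 := by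
    intro v hv
    obtain ⟨i, _, hi⟩ := Finset.mem_image.mp hv
    subst hi
    have hrank := hker i
    obtain ⟨s, hscard, hsind⟩ :=
      le_rank_iff_exists_linearIndependent_finset.mp hrank
    have hcard : Fintype.card {j : Fin m // lam j = lam i} = Fintype.card ↥(s : Set (LinearMap.ker (T (lam i) : H →ₗ[ℂ] H))) := by
      rw [Fintype.card_subtype]
      simp only [Finset.coe_sort_coe, Fintype.card_coe]
      exact hscard.symm
    obtain ⟨e⟩ := Fintype.card_eq.mp hcard
    refine ⟨fun j => ((e j : LinearMap.ker (T (lam i) : H →ₗ[ℂ] H)) : H), ?_, ?_⟩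
    · have h1 : LinearIndependent ℂ
          (fun j : {j : Fin m // lam j = lam i} => ((e j : LinearMap.ker (T (lam i) : H →ₗ[ℂ] H)))) :=
        hsind.comp e e.injective
      exact h1.map' (LinearMap.ker (T (lam i) : H →ₗ[ℂ] H)).subtype (Submodule.ker_subtype _)
    · intro j
      have := (e j : LinearMap.ker (T (lam i) : H →ₗ[ℂ] H)).2
      rw [LinearMap.mem_ker] at this
      exact this
  choose g hg1 hg2 using hsel
  have hmemim : ∀ j : Fin m, lam j ∈ Finset.image lam Finset.univ :=
    fun j => Finset.mem_image_of_mem lam (Finset.mem_univ j)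
  set u : Fin m → H := fun j => g (lam j) (hmemim j) ⟨j, rfl⟩ with hu
  have hukey : ∀ (a : ℝ) (ha : a ∈ Finset.image lam Finset.univ)
      (j : Fin m) (h : lam j = a), u j = g a ha ⟨j, h⟩ := by
    rintro a ha j rfl; rfl
  refine ⟨u, ?_, fun j => hg2 (lam j) (hmemim j) ⟨j, rfl⟩⟩
  rw [Fintype.linearIndependent_iff]
  intro c hc j
  set X : ℝ → H := fun v => ∑ j' ∈ Finset.univ.filter (fun j' => lam j' = v), c j' • u j'
    with hX
  have hsum : ∑ v ∈ Finset.image lam Finset.univ, X v = 0 := by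
    rw [hX]
    rw [Finset.sum_fiberwise_of_maps_to (fun j' _ => hmemim j') (fun j' => c j' • u j')]
    exact hc
  have hXker : ∀ v ∈ Finset.image lam Finset.univ, T v (X v) = 0 := by
    intro v hv
    rw [hX, map_sum]
    apply Finset.sum_eq_zero
    intro j' hj'
    have hlj : lam j' = v := (Finset.mem_filter.mp hj').2
    subst hlj
    rw [map_smul, hg2 (lam j') (hmemim j') ⟨j', rfl⟩, smul_zero]
  have hX0 := stmt7_indep Δ T hsa hA3 (Finset.image lam Finset.univ)
    (by rintro v hv; obtain ⟨i, _, rfl⟩ := Finset.mem_image.mp hv; exact hlamΔ i)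
    X hXker hsum
  have hXj := hX0 (lam j) (hmemim j)
  simp only [hX] at hXj
  rw [Finset.sum_subtype (p := fun j' => lam j' = lam j)
    (Finset.univ.filter (fun j' => lam j' = lam j))
    (by intro j'; simp) (fun j' => c j' • u j')] at hXj
  have hXj' : ∑ j' : {j' : Fin m // lam j' = lam j},
      c j' • g (lam j) (hmemim j) j' = 0 := by
    rw [← hXj]
    apply Finset.sum_congr rfl
    intro j' _
    rw [hukey (lam j) (hmemim j) j'.1 j'.2]
  have := (Fintype.linearIndependent_iff.mp (hg1 (lam j) (hmemim j)))
    (fun j' => c j'.1) hXj' ⟨j, rfl⟩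
  exact this
end

section
/- Let A be a bounded self-adjoint operator on a Hilbert space H with 0 ∈ ρ(A) (A invertible). Let K₊ be the spectral subspace of A for (0, ∞) and K₋ the spectral subspace for (−∞, 0). Let M ⊆ H be a subspace such that ⟨Ax, x⟩ ≥ 0 for all x ∈ M, and suppose M is maximal with this property. Then the orthogonal projection P₊ of H onto K₊ restricted to M is a bijection from M onto K₊ (after closure); in particular, any A-non-negative subspace M′ of H is isomorphic (via P₊) to a subspace of K₊. -/
open Submodule

open Submodule

local notation "⟪" x ", " y "⟫" => @inner ℂ _ _ x y

lemma stmt9_inj {H : Type*} [NormedAddCommGroup H] [InnerProductSpace ℂ H] [CompleteSpace H]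
    (A : H →L[ℂ] H) (Kp : Submodule ℂ H) [HasOrthogonalProjection Kp]
    (ε : ℝ) (hε : 0 < ε)
    (hneg : ∀ x ∈ Kpᗮ, (inner ℂ (A x) x : ℂ).re ≤ -ε * ‖x‖ ^ 2)
    (M' : Submodule ℂ H) (hM' : ∀ x ∈ M', 0 ≤ (inner ℂ (A x) x : ℂ).re) :
    Set.InjOn (fun x : H => ((orthogonalProjection Kp x : H))) M' := by
  intro x hx y hy hxy
  have hd : x - y ∈ M' := M'.sub_mem hx hy
  have hproj : orthogonalProjection Kp (x - y) = 0 := by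
    rw [map_sub, sub_eq_zero]
    exact Subtype.ext hxy
  have hmem : x - y ∈ Kpᗮ := orthogonalProjection_eq_zero_iff.mp hproj
  have h1 := hM' _ hd
  have h2 := hneg _ hmem
  have h4 : ‖x - y‖ ^ 2 ≤ 0 := by nlinarith
  have h3 : ‖x - y‖ = 0 := by
    have := le_antisymm h4 (sq_nonneg _)
    exact pow_eq_zero_iff two_ne_zero |>.mp this
  exact sub_eq_zero.mp (norm_eq_zero.mp h3)


lemma stmt9_key {H : Type*} [NormedAddCommGroup H] [InnerProductSpace ℂ H] [CompleteSpace H]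
    (A : H →L[ℂ] H) (hA : IsSelfAdjoint A) (hAinv : IsUnit A)
    (Kp : Submodule ℂ H) [HasOrthogonalProjection Kp]
    (ε : ℝ) (hε : 0 < ε)
    (hpos : ∀ x ∈ Kp, ε * ‖x‖ ^ 2 ≤ (inner ℂ (A x) x : ℂ).re)
    (hneg : ∀ x ∈ Kpᗮ, (inner ℂ (A x) x : ℂ).re ≤ -ε * ‖x‖ ^ 2)
    (M : Submodule ℂ H)
    (hMnonneg : ∀ x ∈ M, 0 ≤ (inner ℂ (A x) x : ℂ).re)
    (hMmax : ∀ M' : Submodule ℂ H, (∀ x ∈ M', 0 ≤ (inner ℂ (A x) x : ℂ).re) →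
      M ≤ M' → M' = M)
    (z : H) (hz : z ∈ Kp) (hzM : ∀ x ∈ M, ⟪x, z⟫ = 0) : z = 0 := by
  -- self-adjointness
  have hsa : ∀ u v : H, ⟪A u, v⟫ = ⟪u, A v⟫ := by
    intro u v
    nth_rewrite 1 [← ContinuousLinearMap.isSelfAdjoint_iff'.mp hA]
    exact ContinuousLinearMap.adjoint_inner_left A v u
  -- inverse
  set w : H := (↑hAinv.unit⁻¹ : H →L[ℂ] H) z with hw
  have hAw : A w = z := by
    have key : ((hAinv.unit : H →L[ℂ] H) * ↑hAinv.unit⁻¹) z = z := by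
      rw [Units.mul_inv]; rfl
    rw [hAinv.unit_spec, ContinuousLinearMap.mul_apply] at key
    exact key
  set wp : H := ↑(orthogonalProjection Kp w) with hwp
  set wm : H := w - wp with hwm
  have hwpm : wp ∈ Kp := (orthogonalProjection Kp w).2
  have hwmm : wm ∈ Kpᗮ := Submodule.sub_starProjection_mem_orthogonal (K := Kp) w
  have hsplit : w = wp + wm := by rw [hwm]; abel
  -- key quadratic estimate
  have h0 : ⟪A w, wm⟫ = 0 := by rw [hAw]; exact (Submodule.mem_orthogonal _ _).mp hwmm z hz
  have hqw : ε * ‖w‖ ^ 2 ≤ (⟪A w, w⟫).re := by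
    have e1 : ⟪A w, w⟫ = ⟪A w, wp⟫ := by
      conv_lhs => rw [hsplit, inner_add_right]
      rw [← hsplit, h0, add_zero]
    have e2 : ⟪A w, wp⟫ = ⟪A wp, wp⟫ + ⟪A wm, wp⟫ := by
      conv_lhs => rw [hsplit, map_add, inner_add_left]
    have e3 : ⟪A wp, wm⟫ + ⟪A wm, wm⟫ = 0 := by
      rw [← inner_add_left, ← map_add, ← hsplit]; exact h0
    have e4 : (⟪A wm, wp⟫).re = (⟪A wp, wm⟫).re := by
      rw [hsa wm wp]
      exact inner_re_symm (𝕜 := ℂ) wm (A wp)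
    have e5 : (⟪A wp, wm⟫).re = -(⟪A wm, wm⟫).re := by
      have := congrArg Complex.re e3
      simp only [Complex.add_re, Complex.zero_re] at this
      linarith
    have hp := hpos wp hwpm
    have hn := hneg wm hwmm
    have epyth : ‖w‖ ^ 2 = ‖wp‖ ^ 2 + ‖wm‖ ^ 2 := by
      have horth : ⟪wp, wm⟫ = 0 := (Submodule.mem_orthogonal _ _).mp hwmm wp hwpm
      rw [hsplit, @norm_add_sq ℂ, horth]
      simp
    have e6 : (⟪A w, w⟫).re = (⟪A wp, wp⟫).re - (⟪A wm, wm⟫).re := by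
      rw [e1, e2, Complex.add_re, e4, e5]; ring
    rw [e6, epyth]
    nlinarith
  -- A-orthogonality of w to M
  have hAorth : ∀ x ∈ M, ⟪A x, w⟫ = 0 := by
    intro x hx
    rw [hsa, hAw]
    exact hzM x hx
  by_cases hwM : w ∈ M
  · have h1 : ⟪w, z⟫ = 0 := hzM w hwM
    have h2' : ⟪A w, w⟫ = (starRingEnd ℂ) ⟪w, z⟫ := by
      rw [← inner_conj_symm (A w) w, hAw]
    have h2 : (⟪A w, w⟫).re = 0 := by rw [h2', h1]; simp
    have hw0 : w = 0 := by
      have h3 : ‖w‖ ^ 2 ≤ 0 := by nlinarith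
      have h4 := le_antisymm h3 (sq_nonneg _)
      exact norm_eq_zero.mp (pow_eq_zero_iff two_ne_zero |>.mp h4)
    rw [← hAw, hw0, map_zero]
  · exfalso
    set M' : Submodule ℂ H := M ⊔ (ℂ ∙ w) with hM'
    have hM'nonneg : ∀ u ∈ M', 0 ≤ (⟪A u, u⟫).re := by
      intro u hu
      rcases Submodule.mem_sup.mp hu with ⟨x, hx, v, hv, rfl⟩
      rcases Submodule.mem_span_singleton.mp hv with ⟨c, rfl⟩
      have hx0 : ⟪A x, c • w⟫ = 0 := by rw [inner_smul_right, hAorth x hx, mul_zero]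
      have hx1 : ⟪A (c • w), x⟫ = 0 := by
        rw [← inner_conj_symm (A (c • w)) x, ← hsa x (c • w), hx0, map_zero]
      have hcc : ⟪A (c • w), c • w⟫ = (Complex.normSq c : ℂ) * ⟪A w, w⟫ := by
        rw [map_smul, inner_smul_left, inner_smul_right, ← mul_assoc,
          ← Complex.normSq_eq_conj_mul_self]
      have hexp : ⟪A (x + c • w), x + c • w⟫ = ⟪A x, x⟫ + (Complex.normSq c : ℂ) * ⟪A w, w⟫ := by
        rw [map_add, inner_add_left, inner_add_right, inner_add_right, hx0, hx1, hcc]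
        ring
      rw [hexp, Complex.add_re, Complex.re_ofReal_mul]
      have h1 := hMnonneg x hx
      have h2 : 0 ≤ (⟪A w, w⟫).re := le_trans (by positivity) hqw
      have h3 : 0 ≤ Complex.normSq c := Complex.normSq_nonneg c
      nlinarith
    have heq := hMmax M' hM'nonneg le_sup_left
    have hmem : w ∈ M' := Submodule.mem_sup_right (Submodule.mem_span_singleton_self w)
    rw [heq] at hmem
    exact hwM hmem

/-- angular operator representation: let `A` be a bounded self-adjoint
invertible operator, `Kp = K₊`, `Kpᗮ = K₋` its spectral subspaces for `(0,∞)` and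
`(−∞,0)` (encoded by: `A` is uniformly positive on `K₊` and uniformly negative on
`K₋ = K₊ᗮ`, which holds since `0 ∈ ρ(A)`).  If `M` is a maximal `A`-non-negative
subspace, then the orthogonal projection `P₊` onto `K₊` is injective on `M` and maps
`M` onto a dense subspace of `K₊` (onto `K₊` after closure); and `P₊` is injective on
every `A`-non-negative subspace `M′`. -/
theorem stmt9 {H : Type*} [NormedAddCommGroup H] [InnerProductSpace ℂ H] [CompleteSpace H]
    (A : H →L[ℂ] H) (hA : IsSelfAdjoint A) (hAinv : IsUnit A)
    (Kp : Submodule ℂ H) [HasOrthogonalProjection Kp]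
    (ε : ℝ) (hε : 0 < ε)
    (hpos : ∀ x ∈ Kp, ε * ‖x‖ ^ 2 ≤ (inner ℂ (A x) x : ℂ).re)
    (hneg : ∀ x ∈ Kpᗮ, (inner ℂ (A x) x : ℂ).re ≤ -ε * ‖x‖ ^ 2)
    (M : Submodule ℂ H)
    (hMnonneg : ∀ x ∈ M, 0 ≤ (inner ℂ (A x) x : ℂ).re)
    (hMmax : ∀ M' : Submodule ℂ H, (∀ x ∈ M', 0 ≤ (inner ℂ (A x) x : ℂ).re) →
      M ≤ M' → M' = M) :
    Set.InjOn (fun x : H => ((orthogonalProjection Kp x : H))) M ∧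
    closure ((fun x : H => ((orthogonalProjection Kp x : H))) '' M) = (Kp : Set H) ∧
    (∀ M' : Submodule ℂ H, (∀ x ∈ M', 0 ≤ (inner ℂ (A x) x : ℂ).re) →
      Set.InjOn (fun x : H => ((orthogonalProjection Kp x : H))) M') := by
  have horthKp : Kpᗮᗮ = Kp := Submodule.orthogonal_orthogonal Kp
  refine ⟨stmt9_inj A Kp ε hε hneg M hMnonneg, ?_, fun M' hM' => stmt9_inj A Kp ε hε hneg M' hM'⟩
  set f : H →L[ℂ] H := Kp.subtypeL.comp (orthogonalProjection Kp) with hf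
  set N : Submodule ℂ H := M.map (f : H →ₗ[ℂ] H) with hN
  have himg : (fun x : H => ((orthogonalProjection Kp x : H))) '' M = (N : Set H) := by
    rw [hN, Submodule.map_coe]
    rfl
  have hNle : N ≤ Kp := by
    rintro u hu
    rcases hu with ⟨x, _, rfl⟩
    exact ((orthogonalProjection Kp) x).2
  have horth : Nᗮ = Kpᗮ := by
    refine le_antisymm ?_ (Submodule.orthogonal_le hNle)
    intro zz hzz
    set zp : H := ↑(orthogonalProjection Kp zz) with hzp
    have hzpKp : zp ∈ Kp := (orthogonalProjection Kp zz).2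
    have hzpM : ∀ x ∈ M, (inner ℂ x zp : ℂ) = 0 := by
      intro x hx
      have h1 : (inner ℂ (↑(orthogonalProjection Kp x) : H) zz : ℂ) = 0 :=
        (Submodule.mem_orthogonal _ _).mp hzz _ ⟨x, hx, rfl⟩
      rwa [← Submodule.starProjection_apply, Submodule.inner_starProjection_left_eq_right] at h1
    have hzp0 : zp = 0 := stmt9_key A hA hAinv Kp ε hε hpos hneg M hMnonneg hMmax zp hzpKp hzpM
    have hpz : ((orthogonalProjection Kp zz : Kp) : H) = 0 := hzp0
    exact Submodule.orthogonalProjectionOnto_eq_zero_iff.mp (ZeroMemClass.coe_eq_zero.mp hpz)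
  rw [himg]
  have h2 : Nᗮᗮ = Kp := by rw [horth, horthKp]
  calc closure (N : Set H) = (N.topologicalClosure : Set H) :=
        (Submodule.topologicalClosure_coe N).symm
    _ = ((Nᗮᗮ : Submodule ℂ H) : Set H) := by rw [Submodule.orthogonal_orthogonal_eq_closure]
    _ = (Kp : Set H) := by rw [h2]
end

section
/- Let A be a bounded self-adjoint invertible operator on a Hilbert space H. Let M be a maximal A-non-negative subspace of H (i.e. ⟨Ax,x⟩ ≥ 0 on M, and M is maximal with this property), let M′ be any A-non-negative subspace, and let L ⊆ M ∩ M′ be a subspace. Then dim(M/L) ≥ dim(M′/L) (as cardinals, or in the finite-codimension sense). -/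
noncomputable section
set_option linter.unusedSectionVars false
set_option linter.unusedVariables false
set_option maxHeartbeats 1000000
open scoped InnerProductSpace
open RCLike

namespace Stmt10Aux

variable {H : Type*} [NormedAddCommGroup H] [InnerProductSpace ℂ H] [CompleteSpace H]

section one
variable (A : H →L[ℂ] H)

/-- the indicator of the positive half line -/
def pfun : ℝ → ℝ := fun x => if 0 < x then 1 else 0

lemma pfun_contOn {s : Set ℝ} (hs : (0:ℝ) ∉ s) : ContinuousOn pfun s := by
  intro x hx
  rcases lt_trichotomy x 0 with h | h | h
  · refine (ContinuousAt.continuousWithinAt ?_)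
    have : pfun =ᶠ[nhds x] (fun _ => (0:ℝ)) := by
      filter_upwards [Iio_mem_nhds h] with y hy
      simp [pfun, not_lt.mpr (le_of_lt (Set.mem_Iio.mp hy))]
    exact (continuousAt_const).congr this.symm
  · exact absurd (h ▸ hx) hs
  · refine (ContinuousAt.continuousWithinAt ?_)
    have : pfun =ᶠ[nhds x] (fun _ => (1:ℝ)) := by
      filter_upwards [Ioi_mem_nhds h] with y hy
      simp [pfun, Set.mem_Ioi.mp hy]
    exact (continuousAt_const).congr this.symm

variable {H : Type*} [NormedAddCommGroup H] [InnerProductSpace ℂ H] [CompleteSpace H]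

variable (A : H →L[ℂ] H)

lemma cont_on (hAinv : IsUnit A) : ContinuousOn pfun (spectrum ℝ A) :=
  pfun_contOn (spectrum.zero_notMem ℝ hAinv)

lemma P_idem (hAinv : IsUnit A) :
    (cfc pfun A) * (cfc pfun A) = cfc pfun A := by
  rw [← cfc_mul pfun pfun A (cont_on A hAinv) (cont_on A hAinv)]
  apply cfc_congr
  intro x _
  simp only [pfun]
  split <;> norm_num

lemma AP_eq (hA : IsSelfAdjoint A) (hAinv : IsUnit A) :
    A * (cfc pfun A) = cfc (fun x => x * pfun x) A := by
  have h := cfc_mul (fun x : ℝ => x) pfun A (by fun_prop) (cont_on A hAinv)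
  rw [cfc_id' ℝ A hA] at h
  exact h.symm

lemma PA_eq (hA : IsSelfAdjoint A) (hAinv : IsUnit A) :
    (cfc pfun A) * A = cfc (fun x => x * pfun x) A := by
  have h := cfc_mul pfun (fun x : ℝ => x) A (cont_on A hAinv) (by fun_prop)
  rw [cfc_id' ℝ A hA] at h
  rw [← h]
  exact cfc_congr fun x _ => mul_comm _ _

-- spectral gap
lemma gap (hAinv : IsUnit A) : ∃ ε : ℝ, 0 < ε ∧ ∀ x ∈ spectrum ℝ A, ε ≤ |x| := by
  rcases (spectrum ℝ A).eq_empty_or_nonempty with h | h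
  · exact ⟨1, one_pos, by simp [h]⟩
  · obtain ⟨x₀, hx₀, hmin⟩ := (spectrum.isCompact A).exists_isMinOn h
      (continuous_abs.continuousOn)
    refine ⟨|x₀|, ?_, fun x hx => hmin hx⟩
    have : x₀ ≠ 0 := fun h0 => spectrum.zero_notMem ℝ hAinv (h0 ▸ hx₀)
    exact abs_pos.mpr this


lemma posAP (hA : IsSelfAdjoint A) (hAinv : IsUnit A) {ε : ℝ}
    (hε : ∀ x ∈ spectrum ℝ A, ε ≤ |x|) :
    0 ≤ A * cfc pfun A - ε • cfc pfun A := by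
  have hc := cont_on A hAinv
  have h1 : cfc (fun x : ℝ => x * pfun x) A = A * cfc pfun A := by
    have h := cfc_mul (fun x : ℝ => x) pfun A (by fun_prop) hc
    rw [cfc_id' ℝ A hA] at h; simpa using h
  have h2 : cfc (fun x : ℝ => ε * pfun x) A = ε • cfc pfun A := cfc_const_mul ε pfun A hc
  have h3 := cfc_sub (fun x : ℝ => x * pfun x) (fun x : ℝ => ε * pfun x) A
    (by exact continuousOn_id.mul hc) (continuousOn_const.mul hc)
  rw [h1, h2] at h3
  rw [← h3]
  apply cfc_nonneg
  intro x hx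
  simp only [pfun]
  split
  · rename_i hxpos
    have := hε x hx
    rw [abs_of_pos hxpos] at this
    nlinarith
  · simp

lemma negAQ (hA : IsSelfAdjoint A) (hAinv : IsUnit A) {ε : ℝ}
    (hε : ∀ x ∈ spectrum ℝ A, ε ≤ |x|) :
    A * (1 - cfc pfun A) + ε • (1 - cfc pfun A) ≤ 0 := by
  have hc := cont_on A hAinv
  have hq : ContinuousOn (fun x : ℝ => 1 - pfun x) (spectrum ℝ A) :=
    continuousOn_const.sub hc
  have h0 : cfc (fun x : ℝ => 1 - pfun x) A = 1 - cfc pfun A := by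
    rw [cfc_sub _ _ A continuousOn_const hc, cfc_const (1:ℝ) A, map_one]
  have h1 : cfc (fun x : ℝ => x * (1 - pfun x)) A = A * (1 - cfc pfun A) := by
    have h := cfc_mul (fun x : ℝ => x) (fun x => 1 - pfun x) A (by fun_prop) hq
    rw [cfc_id' ℝ A hA, h0] at h; simpa using h
  have h2 : cfc (fun x : ℝ => ε * (1 - pfun x)) A = ε • (1 - cfc pfun A) := by
    rw [cfc_const_mul ε _ A hq, h0]
  have h3 := cfc_add (a := A) (fun x : ℝ => x * (1 - pfun x)) (fun x : ℝ => ε * (1 - pfun x))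
    (by exact continuousOn_id.mul hq) (continuousOn_const.mul hq)
  rw [h1, h2] at h3
  rw [← h3]
  apply cfc_nonpos
  intro x hx
  simp only [pfun]
  split
  · simp
  · rename_i hxn
    have hx0 : x ≠ 0 := fun h => spectrum.zero_notMem ℝ hAinv (h ▸ hx)
    have hxneg : x < 0 := lt_of_le_of_ne (not_lt.mp hxn) hx0
    have := hε x hx
    rw [abs_of_neg hxneg] at this
    nlinarith


end one

section two
variable {A P : H →L[ℂ] H}

lemma r1 (hP1 : ∀ x, P (P x) = P x)
    (hPsym : ∀ x y : H, ⟪P x, y⟫_ℂ = ⟪x, P y⟫_ℂ)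
    (hAP : ∀ x, A (P x) = P (A x)) (x : H) :
    ⟪A (P x), P x⟫_ℂ = ⟪A (P x), x⟫_ℂ := by
  calc ⟪A (P x), P x⟫_ℂ = ⟪P (A (P x)), x⟫_ℂ := (hPsym _ _).symm
  _ = ⟪A (P (P x)), x⟫_ℂ := by rw [hAP (P x)]
  _ = ⟪A (P x), x⟫_ℂ := by rw [hP1]

lemma r2 (hP1 : ∀ x, P (P x) = P x)
    (hPsym : ∀ x y : H, ⟪P x, y⟫_ℂ = ⟪x, P y⟫_ℂ) (x : H) :
    RCLike.re ⟪P x, x⟫_ℂ = ‖P x‖^2 := by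
  have h : ⟪P x, x⟫_ℂ = ⟪P x, P x⟫_ℂ := by
    conv_lhs => rw [← hP1 x]
    exact hPsym _ _
  rw [h, inner_self_eq_norm_sq]

lemma smul_inner_re (ε : ℝ) (u v : H) :
    RCLike.re ⟪ε • u, v⟫_ℂ = ε * RCLike.re ⟪u, v⟫_ℂ := by
  rw [show ε • u = (ε : ℂ) • u from (RCLike.real_smul_eq_coe_smul (K := ℂ) ε u : _),
    inner_smul_left]
  simp [RCLike.conj_ofReal]

lemma e1 {ε : ℝ} (h : 0 ≤ A * P - ε • P)
    (hP1 : ∀ x, P (P x) = P x)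
    (hPsym : ∀ x y : H, ⟪P x, y⟫_ℂ = ⟪x, P y⟫_ℂ)
    (hAP : ∀ x, A (P x) = P (A x)) (x : H) :
    ε * ‖P x‖^2 ≤ RCLike.re ⟪A (P x), P x⟫_ℂ := by
  have h' := (RCLike.nonneg_iff.mp
    (((ContinuousLinearMap.nonneg_iff_isPositive _).mp h).inner_nonneg_left x)).1
  have hTx : (A * P - ε • P) x = A (P x) - ε • P x := by
    simp [ContinuousLinearMap.sub_apply, ContinuousLinearMap.smul_apply,
      ContinuousLinearMap.mul_apply]
  rw [hTx, inner_sub_left, map_sub, smul_inner_re, r2 hP1 hPsym] at h'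
  rw [r1 hP1 hPsym hAP x]
  linarith


lemma e2 {ε : ℝ} (h : A * Q + ε • Q ≤ 0)
    (hQ1 : ∀ x, Q (Q x) = Q x)
    (hQsym : ∀ x y : H, ⟪Q x, y⟫_ℂ = ⟪x, Q y⟫_ℂ)
    (hAQ : ∀ x, A (Q x) = Q (A x)) (x : H) :
    RCLike.re ⟪A (Q x), Q x⟫_ℂ ≤ -(ε * ‖Q x‖^2) := by
  have h0 : 0 ≤ -(A * Q + ε • Q) := neg_nonneg.mpr h
  have h' := (RCLike.nonneg_iff.mp
    (((ContinuousLinearMap.nonneg_iff_isPositive _).mp h0).inner_nonneg_left x)).1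
  have hTx : (-(A * Q + ε • Q)) x = -(A (Q x) + ε • Q x) := by
    simp [ContinuousLinearMap.add_apply, ContinuousLinearMap.smul_apply,
      ContinuousLinearMap.mul_apply]
  rw [hTx, inner_neg_left, inner_add_left, map_neg, map_add, smul_inner_re,
    r2 hQ1 hQsym] at h'
  rw [r1 hQ1 hQsym hAQ x]
  linarith

lemma orth (hP1 : ∀ x, P (P x) = P x)
    (hPsym : ∀ x y : H, ⟪P x, y⟫_ℂ = ⟪x, P y⟫_ℂ) (x : H) :
    ⟪P x, x - P x⟫_ℂ = 0 := by
  rw [inner_sub_right]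
  have h1 : ⟪P x, P x⟫_ℂ = ⟪x, P x⟫_ℂ := by
    calc ⟪P x, P x⟫_ℂ = ⟪x, P (P x)⟫_ℂ := hPsym _ _
    _ = ⟪x, P x⟫_ℂ := by rw [hP1]
  rw [h1, hPsym]
  simp

lemma pythag (hP1 : ∀ x, P (P x) = P x)
    (hPsym : ∀ x y : H, ⟪P x, y⟫_ℂ = ⟪x, P y⟫_ℂ) (x : H) :
    ‖x‖^2 = ‖P x‖^2 + ‖x - P x‖^2 := by
  have h := norm_add_sq (𝕜 := ℂ) (P x) (x - P x)
  rw [orth hP1 hPsym x] at h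
  simpa using h

lemma e3 (hAsym : ∀ x y : H, ⟪A x, y⟫_ℂ = ⟪x, A y⟫_ℂ)
    (hP1 : ∀ x, P (P x) = P x)
    (hPsym : ∀ x y : H, ⟪P x, y⟫_ℂ = ⟪x, P y⟫_ℂ)
    (hAP : ∀ x, A (P x) = P (A x)) (x : H) :
    RCLike.re ⟪A x, x⟫_ℂ
      = RCLike.re ⟪A (P x), P x⟫_ℂ + RCLike.re ⟪A (x - P x), x - P x⟫_ℂ := by
  have hcross1 : ⟪A (P x), x - P x⟫_ℂ = 0 := by
    rw [inner_sub_right, r1 hP1 hPsym hAP x]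
    simp
  have hcross2 : ⟪A (x - P x), P x⟫_ℂ = 0 := by
    rw [hAsym, ← inner_conj_symm, hcross1, map_zero]
  have hsplit : ⟪A x, x⟫_ℂ
      = ⟪A (P x), P x⟫_ℂ + ⟪A (P x), x - P x⟫_ℂ
        + (⟪A (x - P x), P x⟫_ℂ + ⟪A (x - P x), x - P x⟫_ℂ) := by
    have hxx : P x + (x - P x) = x := by abel
    rw [← inner_add_right, ← inner_add_right, ← inner_add_left, ← map_add, hxx]
  rw [hsplit, hcross1, hcross2]
  simp


end two

section three
variable {A P : H →L[ℂ] H}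

section core
variable (hAsym : ∀ x y : H, ⟪A x, y⟫_ℂ = ⟪x, A y⟫_ℂ)
  (hP1 : ∀ x, P (P x) = P x)
  (hPsym : ∀ x y : H, ⟪P x, y⟫_ℂ = ⟪x, P y⟫_ℂ)
  (hAP : ∀ x, A (P x) = P (A x))
  {ε : ℝ} (hε : 0 < ε)
  (hpos : 0 ≤ A * P - ε • P)
  (hneg : A * (1 - P) + ε • (1 - P) ≤ 0)

include hAsym hP1 hPsym hAP hε hpos hneg

lemma key_bound (x : H) (hx : 0 ≤ RCLike.re ⟪A x, x⟫_ℂ) :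
    ε * ‖x - P x‖^2 ≤ ‖A‖ * ‖P x‖^2 := by
  have hQapp : ∀ z, (1 - P) z = z - P z := fun z => by
    simp [ContinuousLinearMap.sub_apply]
  have hQ1 : ∀ z, (1 - P) ((1 - P) z) = (1 - P) z := fun z => by
    simp only [hQapp, map_sub, hP1]
    abel
  have hQsym : ∀ x y : H, ⟪(1 - P) x, y⟫_ℂ = ⟪x, (1 - P) y⟫_ℂ := fun x y => by
    simp only [hQapp, inner_sub_left, inner_sub_right, hPsym]
  have hAQ : ∀ z, A ((1 - P) z) = (1 - P) (A z) := fun z => by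
    simp only [hQapp, map_sub, hAP]
  have h2 := e2 hneg hQ1 hQsym hAQ x
  rw [hQapp] at h2
  have h3 := e3 hAsym hP1 hPsym hAP x
  have h4 : RCLike.re ⟪A (P x), P x⟫_ℂ ≤ ‖A‖ * ‖P x‖^2 := by
    calc RCLike.re ⟪A (P x), P x⟫_ℂ ≤ ‖(⟪A (P x), P x⟫_ℂ)‖ := RCLike.re_le_norm _
    _ ≤ ‖A (P x)‖ * ‖P x‖ := norm_inner_le_norm _ _
    _ ≤ (‖A‖ * ‖P x‖) * ‖P x‖ :=
        mul_le_mul_of_nonneg_right (A.le_opNorm _) (norm_nonneg _)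
    _ = ‖A‖ * ‖P x‖^2 := by ring
  linarith

lemma key_inj (x : H) (hx : 0 ≤ RCLike.re ⟪A x, x⟫_ℂ) (hPx : P x = 0) : x = 0 := by
  have h := key_bound hAsym hP1 hPsym hAP hε hpos hneg x hx
  rw [hPx] at h
  simp only [norm_zero, sub_zero] at h
  have : ‖x‖^2 ≤ 0 := by nlinarith
  have : ‖x‖ = 0 := by nlinarith [sq_nonneg ‖x‖, norm_nonneg x]
  simpa using this

lemma key_norm (x : H) (hx : 0 ≤ RCLike.re ⟪A x, x⟫_ℂ) :
    ‖x‖ ≤ Real.sqrt (1 + ‖A‖/ε) * ‖P x‖ := by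
  have hb := key_bound hAsym hP1 hPsym hAP hε hpos hneg x hx
  have hpy := pythag hP1 hPsym x
  have hA0 : 0 ≤ ‖A‖ := norm_nonneg _
  have hc0 : (0:ℝ) ≤ 1 + ‖A‖/ε := by positivity
  have h1 : ‖x‖^2 ≤ (1 + ‖A‖/ε) * ‖P x‖^2 := by
    have : ‖x - P x‖^2 ≤ (‖A‖/ε) * ‖P x‖^2 := by
      rw [div_mul_eq_mul_div, le_div_iff₀ hε]
      nlinarith
    nlinarith
  have h2 : ‖x‖^2 ≤ (Real.sqrt (1 + ‖A‖/ε) * ‖P x‖)^2 := by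
    rw [mul_pow, Real.sq_sqrt hc0]
    exact h1
  have h3 := Real.sqrt_le_sqrt h2
  rwa [Real.sqrt_sq (norm_nonneg x), Real.sqrt_sq (by positivity)] at h3

end core

end three

section four
variable {A P : H →L[ℂ] H}

theorem core (hAinv : IsUnit A)
    (hAsym : ∀ x y : H, ⟪A x, y⟫_ℂ = ⟪x, A y⟫_ℂ)
    (hP1 : ∀ x, P (P x) = P x)
    (hPsym : ∀ x y : H, ⟪P x, y⟫_ℂ = ⟪x, P y⟫_ℂ)
    (hAP : ∀ x, A (P x) = P (A x))
    {ε : ℝ} (hε : 0 < ε)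
    (hpos : 0 ≤ A * P - ε • P)
    (hneg : A * (1 - P) + ε • (1 - P) ≤ 0)
    (M M' L : Submodule ℂ H)
    (hM : ∀ x ∈ M, 0 ≤ RCLike.re ⟪A x, x⟫_ℂ)
    (hMmax : ∀ N : Submodule ℂ H, (∀ x ∈ N, 0 ≤ RCLike.re ⟪A x, x⟫_ℂ) → M ≤ N → N = M)
    (hM' : ∀ x ∈ M', 0 ≤ RCLike.re ⟪A x, x⟫_ℂ)
    (hLM : L ≤ M) (hLM' : L ≤ M') :
    Module.rank ℂ (↥M' ⧸ L.comap M'.subtype) ≤ Module.rank ℂ (↥M ⧸ L.comap M.subtype) := by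
  classical
  -- inverse of A
  set B : H →L[ℂ] H := ↑(hAinv.unit⁻¹) with hBdef
  have hBA : ∀ x, B (A x) = x := by
    have h1 : B * A = 1 := hAinv.val_inv_mul
    intro x
    have := DFunLike.congr_fun h1 x
    simpa [ContinuousLinearMap.mul_apply] using this
  have hAB : ∀ x, A (B x) = x := by
    have h1 : A * B = 1 := hAinv.mul_val_inv
    intro x
    have := DFunLike.congr_fun h1 x
    simpa [ContinuousLinearMap.mul_apply] using this
  have hPB : ∀ x, P (B x) = B (P x) := by
    intro x
    have h := hAP (B x)
    rw [hAB x] at h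
    calc P (B x) = B (A (P (B x))) := (hBA _).symm
    _ = B (P x) := by rw [h]
  -- M is closed
  have hScl : IsClosed {x : H | 0 ≤ RCLike.re ⟪A x, x⟫_ℂ} :=
    isClosed_le continuous_const
      (RCLike.continuous_re.comp (Continuous.inner A.continuous continuous_id))
  have hMtc : M.topologicalClosure = M := by
    refine hMmax M.topologicalClosure ?_ M.le_topologicalClosure
    intro x hx
    have hx' : x ∈ closure (M : Set H) := hx
    exact closure_minimal (fun y hy => hM y hy) hScl hx'
  have hMclosed : IsClosed (M : Set H) := by
    rw [← hMtc]; exact Submodule.isClosed_topologicalClosure M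
  haveI : CompleteSpace M := hMclosed.completeSpace_coe
  -- P(M) is closed
  set PM : Submodule ℂ H := M.map (P : H →ₗ[ℂ] H) with hPMdef
  have hPMclosed : IsClosed (PM : Set H) := by
    set c := Real.sqrt (1 + ‖A‖/ε) with hcdef
    have hc0 : 0 ≤ c := Real.sqrt_nonneg _
    set F : M →L[ℂ] H := P.comp M.subtypeL with hFdef
    have hbound : ∀ x : ↥M, ‖x‖ ≤ Real.toNNReal c * ‖F x‖ := by
      intro x
      rw [Real.coe_toNNReal c hc0]
      exact key_norm hAsym hP1 hPsym hAP hε hpos hneg (x : H) (hM x x.2)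
    have hanti := AddMonoidHomClass.antilipschitz_of_bound F hbound
    have hrange : IsClosed (Set.range F) := hanti.isClosed_range F.uniformContinuous
    have hset : (PM : Set H) = Set.range F := by
      ext z
      constructor
      · rintro ⟨y, hy, rfl⟩
        exact ⟨⟨y, hy⟩, rfl⟩
      · rintro ⟨y, rfl⟩
        exact ⟨y, y.2, rfl⟩
    rw [hset]; exact hrange
  -- A(P(M)) is closed
  set APM : Submodule ℂ H := PM.map (A : H →ₗ[ℂ] H) with hAPMdef
  have hAPMclosed : IsClosed (APM : Set H) := by
    have hset : (APM : Set H) = B ⁻¹' (PM : Set H) := by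
      ext z
      constructor
      · rintro ⟨p, hp, rfl⟩
        show B (A p) ∈ (PM : Set H)
        rw [hBA]; exact hp
      · intro hz
        exact ⟨B z, hz, hAB z⟩
    rw [hset]; exact hPMclosed.preimage B.continuous
  haveI : CompleteSpace APM := hAPMclosed.completeSpace_coe
  have hPAPM : ∀ z ∈ APM, P z = z := by
    rintro z hz
    obtain ⟨p, hp, rfl⟩ := Submodule.mem_map.mp hz
    obtain ⟨m, hm, rfl⟩ := Submodule.mem_map.mp hp
    show P (A (P m)) = A (P m)
    rw [← hAP, hP1]
  -- the key surjectivity claim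
  have hclaim : ∀ w : H, P w ∈ APM := by
    by_contra hcon
    push_neg at hcon
    obtain ⟨w, hw⟩ := hcon
    set u0 : H := P w - ↑(APM.orthogonalProjectionOnto (P w)) with hu0def
    have hu0orth : u0 ∈ APMᗮ := APM.sub_starProjection_mem_orthogonal (P w)
    have hu0ne : u0 ≠ 0 := by
      intro h0
      apply hw
      have hv : P w = ↑(APM.orthogonalProjectionOnto (P w)) := by
        rwa [sub_eq_zero] at h0
      rw [hv]
      exact (APM.orthogonalProjectionOnto (P w)).2
    have hPu0 : P u0 = u0 := by
      rw [hu0def, map_sub, hP1 w, hPAPM _ (APM.orthogonalProjectionOnto (P w)).2]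
    have hAu0 : ∀ x ∈ M, ⟪A u0, x⟫_ℂ = 0 := by
      intro x hx
      have h1 : A (P x) ∈ APM := Submodule.mem_map_of_mem (Submodule.mem_map_of_mem hx)
      have h2 : ⟪A (P x), u0⟫_ℂ = 0 := (Submodule.mem_orthogonal APM u0).mp hu0orth _ h1
      calc ⟪A u0, x⟫_ℂ = ⟪u0, A x⟫_ℂ := hAsym _ _
      _ = ⟪P u0, A x⟫_ℂ := by rw [hPu0]
      _ = ⟪u0, P (A x)⟫_ℂ := hPsym _ _
      _ = ⟪u0, A (P x)⟫_ℂ := by rw [hAP]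
      _ = (starRingEnd ℂ) ⟪A (P x), u0⟫_ℂ := (inner_conj_symm _ _).symm
      _ = 0 := by rw [h2]; simp
    have hAu0u0 : ε * ‖u0‖^2 ≤ RCLike.re ⟪A u0, u0⟫_ℂ := by
      have h := e1 hpos hP1 hPsym hAP u0
      rwa [hPu0] at h
    set N : Submodule ℂ H := M ⊔ Submodule.span ℂ {u0} with hNdef
    have hNnn : ∀ x ∈ N, 0 ≤ RCLike.re ⟪A x, x⟫_ℂ := by
      intro x hxN
      obtain ⟨m, hm, s, hs, rfl⟩ := Submodule.mem_sup.mp hxN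
      obtain ⟨cc, rfl⟩ := Submodule.mem_span_singleton.mp hs
      have hZ0 : ⟪A u0, m⟫_ℂ = 0 := hAu0 m hm
      have hZ1 : ⟪A (cc • u0), m⟫_ℂ = 0 := by
        rw [map_smul, inner_smul_left, hZ0, mul_zero]
      have hZ2 : ⟪A m, cc • u0⟫_ℂ = 0 := by
        rw [inner_smul_right]
        have h3 : ⟪A m, u0⟫_ℂ = 0 := by
          calc ⟪A m, u0⟫_ℂ = ⟪m, A u0⟫_ℂ := hAsym _ _
          _ = (starRingEnd ℂ) ⟪A u0, m⟫_ℂ := (inner_conj_symm _ _).symm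
          _ = 0 := by rw [hZ0]; simp
        rw [h3, mul_zero]
      have hdiag : 0 ≤ RCLike.re ⟪A (cc • u0), cc • u0⟫_ℂ := by
        rw [map_smul, inner_smul_left, inner_smul_right, ← mul_assoc, RCLike.conj_mul]
        rw [← RCLike.ofReal_pow, RCLike.re_ofReal_mul]
        have h4 : 0 ≤ RCLike.re ⟪A u0, u0⟫_ℂ := by
          have : 0 ≤ ε * ‖u0‖^2 := by positivity
          linarith
        exact mul_nonneg (sq_nonneg _) h4
      have hexp : ⟪A (m + cc • u0), m + cc • u0⟫_ℂ
          = ⟪A m, m⟫_ℂ + ⟪A (cc • u0), cc • u0⟫_ℂ := by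
        rw [map_add, inner_add_left, inner_add_right, inner_add_right, hZ1, hZ2]
        ring
      rw [hexp, map_add]
      exact add_nonneg (hM m hm) hdiag
    have hNM := hMmax N hNnn le_sup_left
    have hu0M : u0 ∈ M := by
      rw [← hNM]
      exact Submodule.mem_sup_right (Submodule.mem_span_singleton_self u0)
    have h5 := hAu0 u0 hu0M
    rw [h5] at hAu0u0
    simp only [map_zero] at hAu0u0
    have h6 : 0 < ‖u0‖ := norm_pos_iff.mpr hu0ne
    nlinarith [mul_pos hε (mul_pos h6 h6)]
  have hsurj : ∀ y : H, ∃ x ∈ M, P x = P y := by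
    intro y
    obtain ⟨p, hp, hpe⟩ := Submodule.mem_map.mp (hclaim (A y))
    obtain ⟨m, hm, rfl⟩ := Submodule.mem_map.mp hp
    refine ⟨m, hm, ?_⟩
    have h2 : B (A (P m)) = B (P (A y)) := congrArg B hpe
    rw [hBA, ← hPB, hBA] at h2
    exact h2
  -- injectivity on non-negative subspaces
  have hinjM : ∀ x ∈ M, P x = 0 → x = 0 := fun x hx h0 =>
    key_inj hAsym hP1 hPsym hAP hε hpos hneg x (hM x hx) h0
  have hinjM' : ∀ x ∈ M', P x = 0 → x = 0 := fun x hx h0 =>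
    key_inj hAsym hP1 hPsym hAP hε hpos hneg x (hM' x hx) h0
  -- linear algebra
  set Pl : H →ₗ[ℂ] H := (P : H →ₗ[ℂ] H) with hPldef
  set K' : Submodule ℂ H := LinearMap.range Pl with hK'def
  set f : ↥M →ₗ[ℂ] ↥K' :=
    LinearMap.codRestrict K' (Pl.comp M.subtype)
      (fun c => LinearMap.mem_range.mpr ⟨(c : H), rfl⟩) with hfdef
  set g : ↥M' →ₗ[ℂ] ↥K' :=
    LinearMap.codRestrict K' (Pl.comp M'.subtype)
      (fun c => LinearMap.mem_range.mpr ⟨(c : H), rfl⟩) with hgdef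
  have hfcoe : ∀ x : ↥M, (f x : H) = P (x : H) := fun x => rfl
  have hgcoe : ∀ x : ↥M', (g x : H) = P (x : H) := fun x => rfl
  have hfinj : Function.Injective f := by
    intro a b hab
    have h1 : P ((a : H) - b) = 0 := by
      rw [map_sub]
      have := congrArg Subtype.val hab
      rw [hfcoe, hfcoe] at this
      rw [this, sub_self]
    have h2 := hinjM _ (sub_mem a.2 b.2) h1
    exact Subtype.ext (sub_eq_zero.mp h2)
  have hfsurj : Function.Surjective f := by
    rintro ⟨v, hv⟩
    obtain ⟨w, hw⟩ := LinearMap.mem_range.mp hv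
    obtain ⟨x, hxM, hx⟩ := hsurj w
    refine ⟨⟨x, hxM⟩, ?_⟩
    apply Subtype.ext
    rw [hfcoe]
    show P x = v
    rw [hx]
    exact hw
  set e : ↥M ≃ₗ[ℂ] ↥K' := LinearEquiv.ofBijective f ⟨hfinj, hfsurj⟩ with hedef
  set φ : ↥M' →ₗ[ℂ] ↥M := (e.symm : ↥K' →ₗ[ℂ] ↥M).comp g with hφdef
  have hφP : ∀ y : ↥M', P ((φ y : ↥M) : H) = P (y : H) := by
    intro y
    have h1 : f (e.symm (g y)) = g y := e.apply_symm_apply (g y)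
    have h2 := congrArg Subtype.val h1
    rw [hfcoe, hgcoe] at h2
    exact h2
  have hφL : ∀ y : ↥M', (y : H) ∈ L → ((φ y : ↥M) : H) = (y : H) := by
    intro y hy
    have hd : P (((φ y : ↥M) : H) - (y : H)) = 0 := by
      rw [map_sub, hφP, sub_self]
    have hmem : (((φ y : ↥M) : H) - (y : H)) ∈ M := sub_mem (φ y).2 (hLM hy)
    exact sub_eq_zero.mp (hinjM _ hmem hd)
  set L₁ : Submodule ℂ ↥M := L.comap M.subtype with hL₁def
  set L₂ : Submodule ℂ ↥M' := L.comap M'.subtype with hL₂def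
  have hle : L₂ ≤ LinearMap.ker (L₁.mkQ.comp φ) := by
    intro y hy
    have hyL : (y : H) ∈ L := hy
    have h1 : ((φ y : ↥M) : H) ∈ L := by rw [hφL y hyL]; exact hyL
    simp only [LinearMap.mem_ker, LinearMap.comp_apply, Submodule.mkQ_apply,
      Submodule.Quotient.mk_eq_zero]
    exact h1
  have hker : LinearMap.ker (L₁.mkQ.comp φ) ≤ L₂ := by
    intro y hy
    simp only [LinearMap.mem_ker, LinearMap.comp_apply, Submodule.mkQ_apply,
      Submodule.Quotient.mk_eq_zero] at hy
    have h1 : ((φ y : ↥M) : H) ∈ L := hy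
    have hd : P ((y : H) - ((φ y : ↥M) : H)) = 0 := by
      rw [map_sub, hφP, sub_self]
    have hmem : ((y : H) - ((φ y : ↥M) : H)) ∈ M' := sub_mem y.2 (hLM' h1)
    have h2 := sub_eq_zero.mp (hinjM' _ hmem hd)
    show (y : H) ∈ L
    rw [h2]
    exact h1
  set ψ := Submodule.liftQ L₂ (L₁.mkQ.comp φ) hle with hψdef
  have hψinj : Function.Injective ψ :=
    LinearMap.ker_eq_bot.mp (Submodule.ker_liftQ_eq_bot L₂ _ hle hker)
  exact LinearMap.rank_le_of_injective ψ hψinj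


end four
end Stmt10Aux
end

open scoped InnerProductSpace in
/-- Lemma 2.7: let `A` be a bounded self-adjoint invertible operator on a
Hilbert space, `M` a maximal `A`-non-negative subspace, `M'` an `A`-non-negative
subspace and `L ⊆ M ∩ M'`.  Then `dim(M'/L) ≤ dim(M/L)`. -/
theorem stmt10 {H : Type*} [NormedAddCommGroup H] [InnerProductSpace ℂ H] [CompleteSpace H]
    (A : H →L[ℂ] H) (hA : IsSelfAdjoint A) (hAinv : IsUnit A)
    (M M' L : Submodule ℂ H)
    (hMnonneg : ∀ x ∈ M, 0 ≤ (inner ℂ (A x) x : ℂ).re)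
    (hMmax : ∀ N : Submodule ℂ H, (∀ x ∈ N, 0 ≤ (inner ℂ (A x) x : ℂ).re) →
      M ≤ N → N = M)
    (hM'nonneg : ∀ x ∈ M', 0 ≤ (inner ℂ (A x) x : ℂ).re)
    (hLM : L ≤ M) (hLM' : L ≤ M') :
    Module.rank ℂ (↥M' ⧸ L.comap M'.subtype) ≤ Module.rank ℂ (↥M ⧸ L.comap M.subtype) := by
  obtain ⟨ε, hε, hgap⟩ := Stmt10Aux.gap A hAinv
  have hAsym : ∀ x y : H, ⟪A x, y⟫_ℂ = ⟪x, A y⟫_ℂ := fun x y =>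
    (ContinuousLinearMap.isSelfAdjoint_iff_isSymmetric.mp hA) x y
  have hPsa : IsSelfAdjoint (cfc Stmt10Aux.pfun A) := cfc_predicate _ _
  have hPsym : ∀ x y : H, ⟪(cfc Stmt10Aux.pfun A) x, y⟫_ℂ = ⟪x, (cfc Stmt10Aux.pfun A) y⟫_ℂ :=
    fun x y => (ContinuousLinearMap.isSelfAdjoint_iff_isSymmetric.mp hPsa) x y
  have hP1 : ∀ x, (cfc Stmt10Aux.pfun A) ((cfc Stmt10Aux.pfun A) x) = (cfc Stmt10Aux.pfun A) x :=
    fun x => by rw [← ContinuousLinearMap.mul_apply, Stmt10Aux.P_idem A hAinv]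
  have hAP : ∀ x, A ((cfc Stmt10Aux.pfun A) x) = (cfc Stmt10Aux.pfun A) (A x) := fun x => by
    rw [← ContinuousLinearMap.mul_apply, ← ContinuousLinearMap.mul_apply,
      Stmt10Aux.AP_eq A hA hAinv, ← Stmt10Aux.PA_eq A hA hAinv]
  have hpos := Stmt10Aux.posAP A hA hAinv hgap
  have hneg := Stmt10Aux.negAQ A hA hAinv hgap
  have hM : ∀ x ∈ M, 0 ≤ RCLike.re ⟪A x, x⟫_ℂ := fun x hx => by
    simpa using hMnonneg x hx
  have hM2 : ∀ x ∈ M', 0 ≤ RCLike.re ⟪A x, x⟫_ℂ := fun x hx => by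
    simpa using hM'nonneg x hx
  have hMmax2 : ∀ N : Submodule ℂ H, (∀ x ∈ N, 0 ≤ RCLike.re ⟪A x, x⟫_ℂ) → M ≤ N → N = M :=
    fun N hN hMN => hMmax N (fun x hx => by simpa using hN x hx) hMN
  exact Stmt10Aux.core hAinv hAsym hP1 hPsym hAP hε hpos hneg M M' L hM hMmax2 hM2 hLM hLM'
end

section
/- Let A be a self-adjoint operator bounded from below on a Hilbert space H with form a, and let b be a non-negative quadratic form with dom(b) ⊇ dom(a) satisfying b[x] ≤ a₀‖x‖² + b₀·a[x] for all x ∈ dom(a), with constants a₀, b₀ ≥ 0. Let α < β be real numbers with (α, β) ⊂ ρ(A), and let C be the self-adjoint operator associated with the form a + b. If α̂ := α + a₀ + b₀α < β, then (α̂, β) ⊂ ρ(C). -/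
set_option maxHeartbeats 1000000

open ContinuousLinearMap Complex

/-- Auxiliary: for a self-adjoint operator `T`, the cross terms in
`re ⟪T(u+v), v-u⟫` cancel. -/
lemma stmt11_aux_sym {H : Type*} [NormedAddCommGroup H] [InnerProductSpace ℂ H]
    [CompleteSpace H] (T : H →L[ℂ] H) (hT : IsSelfAdjoint T) (u v : H) :
    (inner ℂ (T (u + v)) (v - u) : ℂ).re
      = (inner ℂ (T v) v : ℂ).re - (inner ℂ (T u) u : ℂ).re := by
  have hsym := (ContinuousLinearMap.isSelfAdjoint_iff_isSymmetric.mp hT)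
  have h1 : (inner ℂ (T v) u : ℂ) = starRingEnd ℂ (inner ℂ (T u) v : ℂ) := by
    calc (inner ℂ (T v) u : ℂ) = inner ℂ v (T u) := hsym v u
      _ = starRingEnd ℂ (inner ℂ (T u) v : ℂ) := (inner_conj_symm v (T u)).symm
  have h2 : ((inner ℂ (T v) u : ℂ)).re = ((inner ℂ (T u) v : ℂ)).re := by
    rw [h1, Complex.conj_re]
  simp only [map_add, inner_add_left, inner_sub_right]
  simp only [Complex.add_re, Complex.sub_re]
  linarith

/-- Theorem 3.2: a non-negative relatively bounded form perturbation
closes a spectral gap only from the left.  (Formalised for bounded self-adjoint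
operators: `A` self-adjoint with form `a[x] = Re⟨Ax,x⟩`, `b` a non-negative quadratic
functional with `b[x] ≤ a₀‖x‖² + b₀·a[x]`, and `C` the self-adjoint operator whose form
is `a + b`.  If `(α,β) ⊂ ρ(A)` and `α̂ := α + a₀ + b₀α < β`, then `(α̂,β) ⊂ ρ(C)`.) -/
theorem stmt11 {H : Type*} [NormedAddCommGroup H] [InnerProductSpace ℂ H] [CompleteSpace H]
    (A C : H →L[ℂ] H) (hA : IsSelfAdjoint A) (hC : IsSelfAdjoint C)
    (b : H → ℝ) (hbnonneg : ∀ x, 0 ≤ b x)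
    (a₀ b₀ : ℝ) (ha₀ : 0 ≤ a₀) (hb₀ : 0 ≤ b₀)
    (hrel : ∀ x : H, b x ≤ a₀ * ‖x‖ ^ 2 + b₀ * (inner ℂ (A x) x : ℂ).re)
    (hform : ∀ x : H, (inner ℂ (C x) x : ℂ).re = (inner ℂ (A x) x : ℂ).re + b x)
    (α β : ℝ) (hαβ : α < β)
    (hgap : ∀ lam ∈ Set.Ioo α β, (lam : ℂ) ∉ spectrum ℂ A)
    (hhat : α + a₀ + b₀ * α < β) :
    ∀ lam ∈ Set.Ioo (α + a₀ + b₀ * α) β, (lam : ℂ) ∉ spectrum ℂ C := by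
  intro lam hlam
  obtain ⟨hl1, hl2⟩ := hlam
  -- spectrum of A avoids (α, β)
  have hdich : ∀ t ∈ spectrum ℝ A, t ≤ α ∨ β ≤ t := by
    intro t ht
    by_contra hcon
    push_neg at hcon
    exact hgap t ⟨hcon.1, hcon.2⟩ (by simpa using spectrum.algebraMap_mem ℂ ht)
  have hβα : (0:ℝ) < β - α := sub_pos.mpr hαβ
  -- the cutoff function
  set f : ℝ → ℝ := fun t => min 1 (max 0 ((β - α)⁻¹ * (t - α))) with hfdef
  have hfc : Continuous f := by fun_prop
  have hf0 : ∀ t, t ≤ α → f t = 0 := by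
    intro t ht
    have h1 : (β - α)⁻¹ * (t - α) ≤ 0 :=
      mul_nonpos_of_nonneg_of_nonpos (le_of_lt (inv_pos.mpr hβα)) (sub_nonpos.mpr ht)
    simp only [hfdef]
    rw [max_eq_left h1, min_eq_right zero_le_one]
  have hf1 : ∀ t, β ≤ t → f t = 1 := by
    intro t ht
    have h1 : (1:ℝ) ≤ (β - α)⁻¹ * (t - α) := by
      rw [inv_mul_eq_div, le_div_iff₀ hβα]
      linarith
    simp only [hfdef]
    rw [max_eq_right (le_trans zero_le_one h1), min_eq_left h1]
  -- the spectral projection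
  set P := cfc f A with hPdef
  have hPsa : IsSelfAdjoint P := cfc_predicate f A
  have hP2 : P * P = P := by
    rw [hPdef, ← cfc_mul f f A]
    apply cfc_congr
    intro t ht
    show f t * f t = f t
    rcases hdich t ht with h | h
    · rw [hf0 t h]; ring
    · rw [hf1 t h]; ring
  have hPinner : ∀ y z : H, (inner ℂ (P y) z : ℂ) = inner ℂ y (P z) := by
    intro y z
    conv_lhs => rw [← hPsa.adjoint_eq]
    exact ContinuousLinearMap.adjoint_inner_left P z y
  -- positivity of cfc
  have hkey : ∀ (g : ℝ → ℝ), Continuous g → (∀ t ∈ spectrum ℝ A, 0 ≤ g t) →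
      ∀ x, 0 ≤ (inner ℂ ((cfc g A) x) x : ℂ).re := by
    intro g hg hgs x
    have h0 : (0 : H →L[ℂ] H) ≤ cfc g A := cfc_nonneg hgs
    have := ((nonneg_iff_isPositive _).mp h0).inner_nonneg_left x
    simpa using (Complex.le_def.mp this).1
  have hsub : cfc (fun t : ℝ => t - β) A = A - β • 1 := by
    rw [cfc_sub (fun t : ℝ => t) (fun _ => β) A, cfc_id' ℝ A, cfc_const β A,
      Algebra.algebraMap_eq_smul_one]
  have hsub' : cfc (fun t : ℝ => α - t) A = α • 1 - A := by
    rw [cfc_sub (fun _ : ℝ => α) (fun t : ℝ => t) A, cfc_id' ℝ A, cfc_const α A,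
      Algebra.algebraMap_eq_smul_one]
  have honef : cfc (fun t : ℝ => 1 - f t) A = 1 - P := by
    rw [cfc_sub (fun _ : ℝ => (1:ℝ)) f A, hPdef, cfc_const (1:ℝ) A,
      Algebra.algebraMap_eq_smul_one, one_smul]
  -- first positivity: re ⟪(A - β•1) (P x), P x⟫ ≥ 0
  have hg1 : cfc (fun t => f t * ((t - β) * f t)) A = P * ((A - β • 1) * P) := by
    rw [cfc_mul f _ A, cfc_mul (fun t : ℝ => t - β) f A, hsub, hPdef]
  have hpos1 : ∀ x, 0 ≤ (inner ℂ ((A - β • 1) (P x)) (P x) : ℂ).re := by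
    intro x
    have h := hkey (fun t => f t * ((t - β) * f t)) (by fun_prop) ?_ x
    · rw [hg1, ContinuousLinearMap.mul_apply, ContinuousLinearMap.mul_apply,
        hPinner ((A - β • 1) (P x)) x] at h
      exact h
    · intro t ht
      show 0 ≤ f t * ((t - β) * f t)
      rcases hdich t ht with h | h
      · rw [hf0 t h]; ring_nf; exact le_refl 0
      · rw [hf1 t h]; nlinarith
  -- second positivity: re ⟪(α•1 - A) ((1-P) x), (1-P) x⟫ ≥ 0
  have hg2 : cfc (fun t => (1 - f t) * ((α - t) * (1 - f t))) A
      = (1 - P) * ((α • 1 - A) * (1 - P)) := by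
    rw [cfc_mul (fun t : ℝ => 1 - f t) _ A, cfc_mul (fun t : ℝ => α - t) (fun t => 1 - f t) A,
      hsub', honef]
  have h1Psa : IsSelfAdjoint (1 - P : H →L[ℂ] H) := ((IsSelfAdjoint.one (R := H →L[ℂ] H)).sub hPsa)
  have h1Pinner : ∀ y z : H, (inner ℂ ((1 - P) y) z : ℂ) = inner ℂ y ((1 - P) z) := by
    intro y z
    conv_lhs => rw [← h1Psa.adjoint_eq]
    exact ContinuousLinearMap.adjoint_inner_left (1 - P) z y
  have hpos2 : ∀ x, 0 ≤ (inner ℂ ((α • 1 - A) ((1 - P) x)) ((1 - P) x) : ℂ).re := by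
    intro x
    have h := hkey (fun t => (1 - f t) * ((α - t) * (1 - f t))) (by fun_prop) ?_ x
    · rw [hg2, ContinuousLinearMap.mul_apply, ContinuousLinearMap.mul_apply,
        h1Pinner ((α • 1 - A) ((1 - P) x)) x] at h
      exact h
    · intro t ht
      show 0 ≤ (1 - f t) * ((α - t) * (1 - f t))
      rcases hdich t ht with h | h
      · rw [hf0 t h]; nlinarith
      · rw [hf1 t h]; ring_nf; exact le_refl 0
  -- reduce to invertibility
  rw [spectrum.notMem_iff]
  set D := algebraMap ℂ (H →L[ℂ] H) (lam : ℂ) - C with hDdef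
  have hDsa : IsSelfAdjoint D := by
    rw [hDdef, Algebra.algebraMap_eq_smul_one]
    exact IsSelfAdjoint.sub
      (IsSelfAdjoint.smul (by rw [isSelfAdjoint_iff, Complex.star_def]; exact Complex.conj_ofReal lam)
        (IsSelfAdjoint.one (R := H →L[ℂ] H))) hC
  set U : H →L[ℂ] H := 1 - (P + P) with hUdef
  have hUsa : IsSelfAdjoint U :=
    (IsSelfAdjoint.one (R := H →L[ℂ] H)).sub (hPsa.add hPsa)
  have hU2 : U * U = 1 := by
    rw [hUdef]
    simp only [mul_sub, sub_mul, mul_one, one_mul, add_mul, mul_add, hP2]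
    abel
  have hUinner : ∀ y z : H, (inner ℂ (U y) z : ℂ) = inner ℂ y (U z) := by
    intro y z
    conv_lhs => rw [← hUsa.adjoint_eq]
    exact ContinuousLinearMap.adjoint_inner_left U z y
  -- orthogonality and norm decomposition
  have hP1P : P * (1 - P) = 0 := by rw [mul_sub, mul_one, hP2, sub_self]
  have hortho : ∀ x : H, (inner ℂ (P x) ((1 - P) x) : ℂ) = 0 := by
    intro x
    rw [hPinner x ((1 - P) x)]
    have : P ((1 - P) x) = 0 := by
      rw [← ContinuousLinearMap.mul_apply, hP1P, ContinuousLinearMap.zero_apply]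
    rw [this, inner_zero_right]
  have hnx : ∀ x : H, ‖x‖ ^ 2 = ‖P x‖ ^ 2 + ‖(1 - P) x‖ ^ 2 := by
    intro x
    have hsum : P x + (1 - P) x = x := by
      simp [ContinuousLinearMap.sub_apply, ContinuousLinearMap.one_apply]
    have h2 := norm_add_sq (𝕜 := ℂ) (P x) ((1 - P) x)
    rw [hsum, hortho x] at h2
    simpa using h2
  have hselfre : ∀ z : H, (inner ℂ z z : ℂ).re = ‖z‖ ^ 2 := by
    intro z
    rw [inner_self_eq_norm_sq_to_K (𝕜 := ℂ) z]
    simp [← Complex.ofReal_pow]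
  -- the quadratic form of D
  have hqD : ∀ z : H, (inner ℂ (D z) z : ℂ).re
      = lam * ‖z‖ ^ 2 - (inner ℂ (A z) z : ℂ).re - b z := by
    intro z
    have h1 : D z = (lam : ℂ) • z - C z := by
      rw [hDdef, ContinuousLinearMap.sub_apply, Algebra.algebraMap_eq_smul_one,
        ContinuousLinearMap.smul_apply, ContinuousLinearMap.one_apply]
    rw [h1, inner_sub_left, Complex.sub_re, inner_smul_left, Complex.conj_ofReal,
      Complex.re_ofReal_mul, hform z]
    rw [hselfre z]
    ring
  -- quadratic form bounds from the spectral projections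
  have hup : ∀ x : H, β * ‖P x‖ ^ 2 ≤ (inner ℂ (A (P x)) (P x) : ℂ).re := by
    intro x
    have h := hpos1 x
    rw [ContinuousLinearMap.sub_apply, inner_sub_left, Complex.sub_re,
      ContinuousLinearMap.smul_apply, ContinuousLinearMap.one_apply,
      RCLike.real_smul_eq_coe_smul (K := ℂ), inner_smul_real_left,
      Complex.real_smul, Complex.re_ofReal_mul, hselfre] at h
    linarith
  have hdown : ∀ x : H, (inner ℂ (A ((1 - P) x)) ((1 - P) x) : ℂ).re
      ≤ α * ‖(1 - P) x‖ ^ 2 := by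
    intro x
    have h := hpos2 x
    rw [ContinuousLinearMap.sub_apply, inner_sub_left, Complex.sub_re,
      ContinuousLinearMap.smul_apply, ContinuousLinearMap.one_apply,
      RCLike.real_smul_eq_coe_smul (K := ℂ), inner_smul_real_left,
      Complex.real_smul, Complex.re_ofReal_mul, hselfre] at h
    linarith
  -- the main coercivity estimate
  set c : ℝ := min (lam - (α + a₀ + b₀ * α)) (β - lam) with hcdef
  have hc : 0 < c := lt_min (by linarith) (by linarith)
  have hmain : ∀ x : H, c * ‖x‖ ^ 2 ≤ (inner ℂ (D x) (U x) : ℂ).re := by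
    intro x
    have hsum : P x + (1 - P) x = x := by
      simp [ContinuousLinearMap.sub_apply, ContinuousLinearMap.one_apply]
    have hUx : U x = (1 - P) x - P x := by
      rw [hUdef]
      simp only [ContinuousLinearMap.sub_apply, ContinuousLinearMap.add_apply,
        ContinuousLinearMap.one_apply]
      abel
    have key := stmt11_aux_sym D hDsa (P x) ((1 - P) x)
    rw [hsum, ← hUx] at key
    rw [key, hqD (P x), hqD ((1 - P) x)]
    have h1 := hup x
    have h2 := hdown x
    have h3 := hrel ((1 - P) x)
    have h4 := hbnonneg (P x)
    have h5 : b₀ * (inner ℂ (A ((1 - P) x)) ((1 - P) x) : ℂ).re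
        ≤ b₀ * (α * ‖(1 - P) x‖ ^ 2) := mul_le_mul_of_nonneg_left h2 hb₀
    have h6 : c * ‖(1 - P) x‖ ^ 2 ≤ (lam - (α + a₀ + b₀ * α)) * ‖(1 - P) x‖ ^ 2 :=
      mul_le_mul_of_nonneg_right (min_le_left _ _) (by positivity)
    have h7 : c * ‖P x‖ ^ 2 ≤ (β - lam) * ‖P x‖ ^ 2 :=
      mul_le_mul_of_nonneg_right (min_le_right _ _) (by positivity)
    have h8 : c * ‖x‖ ^ 2 = c * ‖P x‖ ^ 2 + c * ‖(1 - P) x‖ ^ 2 := by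
      rw [hnx x]; ring
    nlinarith [sq_nonneg ‖P x‖, sq_nonneg ‖(1 - P) x‖]
  -- conclude invertibility
  have hUD : IsUnit (U * D) := by
    apply ContinuousLinearMap.isUnit_of_forall_le_norm_inner_map (U * D)
      (c := c.toNNReal) (by simpa using hc)
    intro x
    have h1 : (inner ℂ ((U * D) x) x : ℂ) = inner ℂ (D x) (U x) := by
      rw [ContinuousLinearMap.mul_apply, hUinner (D x) x]
    rw [h1]
    calc ‖x‖ ^ 2 * (c.toNNReal : ℝ) = c * ‖x‖ ^ 2 := by
          rw [Real.coe_toNNReal c hc.le]; ring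
      _ ≤ (inner ℂ (D x) (U x) : ℂ).re := hmain x
      _ ≤ ‖(inner ℂ (D x) (U x) : ℂ)‖ := by
          exact Complex.re_le_norm _
  have hUunit : IsUnit U := ⟨⟨U, U, hU2, hU2⟩, rfl⟩
  have hfin : IsUnit (U * (U * D)) := hUunit.mul hUD
  rwa [← mul_assoc, hU2, one_mul] at hfin
end

section
/- Let t : Δ → (D → ℝ) be a family of quadratic functionals on a set D of unit vectors in a Hilbert space, and let μ₁ < μ₂ in Δ. Suppose ε, δ > 0 are such that for every λ ∈ [μ₁, μ₂] and x ∈ D with ‖x‖ = 1: |t(λ)(x)| ≤ ε implies t′(λ)(x) ≤ −δ, where λ ↦ t(λ)(x) is differentiable. Then for every x ∈ D with ‖x‖ = 1: if t(μ₂)(x) ≥ −ε, then t(μ₁)(x) ≥ min{ε, t(μ₂)(x) + δ(μ₂ − μ₁)}. -/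
open Set Filter Topology

/-- Key contradiction lemma: if `f` is differentiable on `[a,b]` with the
Virozub–Matsaev condition, `|m| ≤ ε`, `f c < m ≤ f lam0` with `c ≤ lam0` in `[a,b]`,
we get a contradiction (moving right from below `m`, `f` cannot climb back to `m`). -/
lemma key_lemma (f f' : ℝ → ℝ) (a b : ℝ)
    (hd : ∀ lam ∈ Set.Icc a b, HasDerivAt f (f' lam) lam)
    (ε δ : ℝ) (hε : 0 < ε) (hδ : 0 < δ)
    (hVM : ∀ lam ∈ Set.Icc a b, |f lam| ≤ ε → f' lam ≤ -δ)
    (c lam0 : ℝ) (hc : c ∈ Set.Icc a b) (hlam0 : lam0 ∈ Set.Icc a b) (hc_le : c ≤ lam0)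
    (m : ℝ) (hm : |m| ≤ ε) (hfc : f c < m) (hflam0 : m ≤ f lam0) : False := by
  have hIcc_sub : Set.Icc c lam0 ⊆ Set.Icc a b := Set.Icc_subset_Icc hc.1 hlam0.2
  have hcont : ContinuousOn f (Set.Icc c lam0) := fun y hy =>
    ((hd y (hIcc_sub hy)).continuousAt).continuousWithinAt
  set S : Set ℝ := Set.Icc c lam0 ∩ {y | m ≤ f y} with hSdef
  have hSne : S.Nonempty := ⟨lam0, ⟨hc_le, le_rfl⟩, hflam0⟩
  have hSbdd : BddBelow S := ⟨c, fun y hy => hy.1.1⟩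
  have hSclosed : IsClosed S := by
    have : S = Set.Icc c lam0 ∩ f ⁻¹' Set.Ici m := by
      ext y; simp [hSdef, Set.mem_preimage, Set.mem_Ici, and_comm]
    rw [this]
    exact hcont.preimage_isClosed_of_isClosed isClosed_Icc isClosed_Ici
  set l := sInf S with hl
  have hlS : l ∈ S := hSclosed.csInf_mem hSne hSbdd
  have hlIcc : l ∈ Set.Icc c lam0 := hlS.1
  have hlab : l ∈ Set.Icc a b := hIcc_sub hlIcc
  have hcl : c < l := by
    rcases lt_or_eq_of_le hlIcc.1 with h | h
    · exact h
    · exact absurd hlS.2 (by rw [← h]; exact not_le.mpr hfc)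
  -- every λ in [c, l) has f λ < m
  have hbelow : ∀ y ∈ Set.Ico c l, f y < m := by
    intro y hy
    by_contra h
    push_neg at h
    have : y ∈ S := ⟨⟨hy.1, lt_of_lt_of_le hy.2 hlIcc.2 |>.le⟩, h⟩
    exact absurd (csInf_le hSbdd this) (not_le.mpr hy.2)
  -- f l ≤ m by left continuity
  have hfl_le : f l ≤ m := by
    have hct : ContinuousWithinAt f (Set.Iio l) l :=
      ((hd l hlab).continuousAt).continuousWithinAt
    refine le_of_tendsto hct ?_
    filter_upwards [Ico_mem_nhdsLT_of_mem (Set.mem_Ioc.mpr ⟨hcl, le_rfl⟩)] with y hy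
    exact (hbelow y hy).le
  have hfl : f l = m := le_antisymm hfl_le hlS.2
  have hderiv_neg : f' l ≤ -δ := hVM l hlab (by rw [hfl]; exact hm)
  have hslope : Tendsto (slope f l) (𝓝[<] l) (𝓝 (f' l)) := by
    have := hasDerivAt_iff_tendsto_slope.mp (hd l hlab)
    exact this.mono_left (nhdsWithin_mono l fun y hy => Set.mem_compl_singleton_iff.mpr (ne_of_lt hy))
  have hev_neg : ∀ᶠ y in 𝓝[<] l, slope f l y < 0 :=
    hslope.eventually_lt_const (lt_of_le_of_lt hderiv_neg (neg_neg_iff_pos.mpr hδ))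
  have hev_mem : ∀ᶠ y in 𝓝[<] l, y ∈ Set.Ico c l :=
    Ico_mem_nhdsLT_of_mem (Set.mem_Ioc.mpr ⟨hcl, le_rfl⟩)
  obtain ⟨y, hy_neg, hy_mem⟩ := (hev_neg.and hev_mem).exists
  -- but slope f l y > 0 since f y < m = f l and y < l
  have : 0 < slope f l y := by
    rw [slope_def_field]
    have h1 : f y - f l < 0 := by rw [hfl]; linarith [hbelow y hy_mem]
    have h2 : y - l < 0 := sub_neg.mpr hy_mem.2
    exact div_pos_of_neg_of_neg h1 h2
  linarith

/-- Lemma 2.8: let `t(λ)` be a family of real functionals on a set `D` of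
unit vectors in a Hilbert space, differentiable in `λ` with derivative `t'`, satisfying
the Virozub–Matsaev condition with constants `ε, δ > 0` on `[μ₁, μ₂]`.  Then for every
unit vector `x ∈ D` with `t(μ₂)(x) ≥ −ε` one has
`t(μ₁)(x) ≥ min {ε, t(μ₂)(x) + δ(μ₂ − μ₁)}`. -/
theorem stmt14 {H : Type*} [NormedAddCommGroup H] [InnerProductSpace ℂ H]
    (D : Set H) (t t' : ℝ → H → ℝ)
    (μ₁ μ₂ : ℝ) (hμ : μ₁ < μ₂)
    (hdiff : ∀ x ∈ D, ‖x‖ = 1 → ∀ lam ∈ Set.Icc μ₁ μ₂,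
      HasDerivAt (fun s => t s x) (t' lam x) lam)
    (ε δ : ℝ) (hε : 0 < ε) (hδ : 0 < δ)
    (hVM : ∀ x ∈ D, ‖x‖ = 1 → ∀ lam ∈ Set.Icc μ₁ μ₂,
      |t lam x| ≤ ε → t' lam x ≤ -δ) :
    ∀ x ∈ D, ‖x‖ = 1 → -ε ≤ t μ₂ x →
      min ε (t μ₂ x + δ * (μ₂ - μ₁)) ≤ t μ₁ x := by
  intro x hxD hx hμ₂
  set f : ℝ → ℝ := fun s => t s x with hf
  set g : ℝ → ℝ := fun s => t' s x with hg
  have hd : ∀ lam ∈ Set.Icc μ₁ μ₂, HasDerivAt f (g lam) lam := hdiff x hxD hx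
  have hvm : ∀ lam ∈ Set.Icc μ₁ μ₂, |f lam| ≤ ε → g lam ≤ -δ := hVM x hxD hx
  have hμ₁mem : μ₁ ∈ Set.Icc μ₁ μ₂ := ⟨le_rfl, hμ.le⟩
  have hμ₂mem : μ₂ ∈ Set.Icc μ₁ μ₂ := ⟨hμ.le, le_rfl⟩
  by_cases h1 : ∃ lam0 ∈ Set.Icc μ₁ μ₂, ε ≤ f lam0
  · -- f μ₁ ≥ ε
    obtain ⟨lam0, hlam0, hflam0⟩ := h1
    have : ε ≤ f μ₁ := by
      by_contra h
      push_neg at h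
      exact key_lemma f g μ₁ μ₂ hd ε δ hε hδ hvm μ₁ lam0 hμ₁mem hlam0 hlam0.1 ε
        (by rw [abs_of_pos hε]) h hflam0
    exact le_trans (min_le_left _ _) this
  · push_neg at h1
    -- f < ε everywhere; also f ≥ -ε everywhere
    have hlow : ∀ lam ∈ Set.Icc μ₁ μ₂, -ε ≤ f lam := by
      intro lam hlam
      by_contra h
      push_neg at h
      exact key_lemma f g μ₁ μ₂ hd ε δ hε hδ hvm lam μ₂ hlam hμ₂mem hlam.2 (-ε)
        (by rw [abs_neg, abs_of_pos hε]) h hμ₂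
    have habs : ∀ lam ∈ Set.Icc μ₁ μ₂, |f lam| ≤ ε := fun lam hlam =>
      abs_le.mpr ⟨hlow lam hlam, (h1 lam hlam).le⟩
    have hder : ∀ lam ∈ Set.Icc μ₁ μ₂, g lam ≤ -δ := fun lam hlam =>
      hvm lam hlam (habs lam hlam)
    -- so φ := f + δ·id is antitone on [μ₁, μ₂]
    have hanti : AntitoneOn (fun s => f s + δ * s) (Set.Icc μ₁ μ₂) := by
      apply antitoneOn_of_deriv_nonpos (convex_Icc μ₁ μ₂)
      · exact fun y hy => (((hd y hy).continuousAt).add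
          ((continuous_const.mul continuous_id).continuousAt)).continuousWithinAt
      · intro y hy
        rw [interior_Icc] at hy
        have hy' : y ∈ Set.Icc μ₁ μ₂ := Set.mem_Icc_of_Ioo hy
        have hda : HasDerivAt (fun s => f s + δ * s) (g y + δ) y := by
          exact ((hd y hy').add ((hasDerivAt_id y).const_mul δ)).congr_deriv (by rw [mul_one])
        exact hda.differentiableAt.differentiableWithinAt
      · intro y hy
        rw [interior_Icc] at hy
        have hy' : y ∈ Set.Icc μ₁ μ₂ := Set.mem_Icc_of_Ioo hy
        have hda : HasDerivAt (fun s => f s + δ * s) (g y + δ) y := by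
          exact ((hd y hy').add ((hasDerivAt_id y).const_mul δ)).congr_deriv (by rw [mul_one])
        rw [hda.deriv]
        linarith [hder y hy']
    have := hanti hμ₁mem hμ₂mem hμ.le
    simp only at this
    have : f μ₂ + δ * (μ₂ - μ₁) ≤ f μ₁ := by linarith
    exact le_trans (min_le_right _ _) this
end

section
/- Let f : [μ₁, μ₂] → ℝ be differentiable, and let ε, δ > 0 be such that |f(λ)| ≤ ε implies f′(λ) ≤ −δ for all λ ∈ [μ₁, μ₂]. If f(μ₂) ≥ −ε, then either f(μ₁) ≥ ε, or f(λ) ∈ [−ε, ε] for all λ ∈ [μ₁, μ₂] and f(μ₁) ≥ f(μ₂) + δ(μ₂ − μ₁). -/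
/-- If `f` is differentiable on `[a,b]`, `f' < 0` at any point of `[a,b]` where `f = c`,
and `f a ≤ c`, then `f < c` on `(a, b]`. -/
lemma key_barrier (f f' : ℝ → ℝ) (a b c : ℝ)
    (hd : ∀ x ∈ Set.Icc a b, HasDerivAt f (f' x) x)
    (hneg : ∀ x ∈ Set.Icc a b, f x = c → f' x < 0)
    (ha : f a ≤ c) : ∀ x ∈ Set.Ioc a b, f x < c := by
  intro x₀ hx₀
  by_contra hcon
  push_neg at hcon
  have hab : a ≤ b := le_trans hx₀.1.le hx₀.2
  have haIcc : a ∈ Set.Icc a b := ⟨le_refl a, hab⟩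
  -- Step 1: f < c eventually on the right of a.
  have E : ∀ᶠ x in nhdsWithin a (Set.Ioi a), f x < c := by
    rcases lt_or_eq_of_le ha with hlt | heq
    · have hca : ContinuousAt f a := (hd a haIcc).continuousAt
      have := hca.eventually_lt (continuousAt_const (y := c)) hlt
      exact this.filter_mono nhdsWithin_le_nhds
    · -- f a = c, so f' a < 0 and slope argument
      have hfa' : f' a < 0 := hneg a haIcc heq
      have hslope := (hasDerivAt_iff_tendsto_slope.mp (hd a haIcc))
      have h1 : ∀ᶠ x in nhdsWithin a {a}ᶜ, slope f a x < 0 :=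
        hslope.eventually_lt_const hfa'
      have h2 : ∀ᶠ x in nhdsWithin a (Set.Ioi a), slope f a x < 0 :=
        h1.filter_mono (nhdsWithin_mono a (by intro x hx; exact ne_of_gt hx))
      refine h2.mp (eventually_mem_nhdsWithin.mono ?_)
      intro x hx hs
      rw [slope_def_field] at hs
      have hxa : 0 < x - a := sub_pos.mpr hx
      have hnum : f x - f a < 0 := by
        by_contra hnn; push_neg at hnn
        exact absurd hs (not_lt.mpr (div_nonneg hnn hxa.le))
      linarith
  -- extract u with f < c on Ioc a u
  obtain ⟨u, hu, hfu⟩ := mem_nhdsGT_iff_exists_Ioc_subset.mp E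
  have hu' : a < u := hu
  by_cases hux : x₀ ≤ u
  · exact absurd (hfu ⟨hx₀.1, hux⟩) (not_lt.mpr hcon)
  push_neg at hux
  -- the set of points in [u, x₀] where f is at least c
  set T : Set ℝ := Set.Icc u x₀ ∩ f ⁻¹' Set.Ici c with hT
  have hsub : Set.Icc u x₀ ⊆ Set.Icc a b := Set.Icc_subset_Icc hu'.le hx₀.2
  have hcontOn : ContinuousOn f (Set.Icc u x₀) := fun x hx =>
    ((hd x (hsub hx)).continuousAt).continuousWithinAt
  have hTclosed : IsClosed T :=
    hcontOn.preimage_isClosed_of_isClosed isClosed_Icc isClosed_Ici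
  have hTne : T.Nonempty := ⟨x₀, ⟨hux.le, le_refl _⟩, hcon⟩
  have hTbdd : BddBelow T := ⟨u, fun t ht => ht.1.1⟩
  set m := sInf T with hm
  have hmT : m ∈ T := hTclosed.csInf_mem hTne hTbdd
  have hum : u ≤ m := le_csInf hTne (fun t ht => ht.1.1)
  have hmx : m ≤ x₀ := hmT.1.2
  have ham : a < m := lt_of_lt_of_le hu' hum
  have hmIcc : m ∈ Set.Icc a b := ⟨ham.le, le_trans hmx hx₀.2⟩
  -- f < c on Ioo a m
  have hltm : ∀ x ∈ Set.Ioo a m, f x < c := by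
    intro x hx
    by_cases hxu : x ≤ u
    · exact hfu ⟨hx.1, hxu⟩
    push_neg at hxu
    have hxT : x ∉ T := notMem_of_lt_csInf hx.2 hTbdd
    have : ¬ c ≤ f x := fun h => hxT ⟨⟨hxu.le, le_trans hx.2.le hmx⟩, h⟩
    linarith
  -- f m ≤ c by left continuity
  have hIooMem : Set.Ioo a m ∈ nhdsWithin m (Set.Iio m) :=
    Ioo_mem_nhdsLT ham
  have hfm_le : f m ≤ c := by
    have htend : Filter.Tendsto f (nhdsWithin m (Set.Iio m)) (nhds (f m)) :=
      ((hd m hmIcc).continuousAt).continuousWithinAt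
    refine le_of_tendsto htend ?_
    filter_upwards [hIooMem] with x hx
    exact (hltm x hx).le
  have hfm : f m = c := le_antisymm hfm_le hmT.2
  have hfm' : f' m < 0 := hneg m hmIcc hfm
  -- slope argument at m from the left: f x > f m = c for some x in Ioo a m
  have hslope := hasDerivAt_iff_tendsto_slope.mp (hd m hmIcc)
  have h1 : ∀ᶠ x in nhdsWithin m {m}ᶜ, slope f m x < 0 :=
    hslope.eventually_lt_const hfm'
  have h2 : ∀ᶠ x in nhdsWithin m (Set.Iio m), slope f m x < 0 :=
    h1.filter_mono (nhdsWithin_mono m (by intro x hx; exact ne_of_lt hx))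
  obtain ⟨x, hsx, hxIoo⟩ := (h2.and (Filter.eventually_of_mem hIooMem (fun x hx => hx))).exists
  rw [slope_def_field] at hsx
  have hxm : x - m < 0 := sub_neg.mpr hxIoo.2
  have hnum : 0 < f x - f m := by
    by_contra hnn; push_neg at hnn
    have : 0 ≤ (f x - f m) / (x - m) := div_nonneg_of_nonpos hnn hxm.le
    linarith
  have := hltm x hxIoo
  linarith


/-- if `f` is differentiable on `[μ₁, μ₂]` with `|f(λ)| ≤ ε ⟹ f′(λ) ≤ −δ`
(`ε, δ > 0`) and `f(μ₂) ≥ −ε`, then either `f(μ₁) ≥ ε`, or `f(λ) ∈ [−ε, ε]` for all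
`λ ∈ [μ₁, μ₂]` and `f(μ₁) ≥ f(μ₂) + δ(μ₂ − μ₁)`. -/
theorem stmt15 (f f' : ℝ → ℝ) (μ₁ μ₂ : ℝ) (hμ : μ₁ < μ₂)
    (hdiff : ∀ lam ∈ Set.Icc μ₁ μ₂, HasDerivAt f (f' lam) lam)
    (ε δ : ℝ) (hε : 0 < ε) (hδ : 0 < δ)
    (hVM : ∀ lam ∈ Set.Icc μ₁ μ₂, |f lam| ≤ ε → f' lam ≤ -δ)
    (h2 : -ε ≤ f μ₂) :
    ε ≤ f μ₁ ∨
      ((∀ lam ∈ Set.Icc μ₁ μ₂, f lam ∈ Set.Icc (-ε) ε) ∧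
        f μ₂ + δ * (μ₂ - μ₁) ≤ f μ₁) := by
  rcases le_or_gt ε (f μ₁) with h1 | h1
  · exact Or.inl h1
  right
  -- upper bound: f < ε on (μ₁, μ₂], hence f ≤ ε on [μ₁, μ₂]
  have hupper : ∀ lam ∈ Set.Icc μ₁ μ₂, f lam ≤ ε := by
    have := key_barrier f f' μ₁ μ₂ ε hdiff
      (fun x hx hfx => lt_of_le_of_lt (hVM x hx (by rw [hfx, abs_of_pos hε])) (by linarith))
      h1.le
    intro lam hlam
    rcases eq_or_lt_of_le hlam.1 with h | h
    · rw [← h]; exact h1.le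
    · exact (this lam ⟨h, hlam.2⟩).le
  -- lower bound via the reflected function g x = -f (μ₁ + μ₂ - x)
  have hlower : ∀ lam ∈ Set.Icc μ₁ μ₂, -ε ≤ f lam := by
    set s := μ₁ + μ₂
    have hrefl : ∀ x ∈ Set.Icc μ₁ μ₂, s - x ∈ Set.Icc μ₁ μ₂ := by
      intro x hx
      exact ⟨by simp only [s]; linarith [hx.2], by simp only [s]; linarith [hx.1]⟩
    have hgd : ∀ x ∈ Set.Icc μ₁ μ₂, HasDerivAt (fun x => -f (s - x)) (f' (s - x)) x := by
      intro x hx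
      have hinner : HasDerivAt (fun x : ℝ => s - x) (-1) x := by
        simpa using (hasDerivAt_id x).const_sub s
      have := ((hdiff (s - x) (hrefl x hx)).comp x hinner).neg
      rw [show f' (s - x) = -(f' (s - x) * -1) by ring]
      exact this
    have hkey := key_barrier (fun x => -f (s - x)) (fun x => f' (s - x)) μ₁ μ₂ ε hgd
      (fun x hx hfx => by
        have habs : |f (s - x)| ≤ ε := by
          rw [abs_le]
          constructor
          · linarith
          · exact hupper _ (hrefl x hx)
        exact lt_of_le_of_lt (hVM _ (hrefl x hx) habs) (by linarith))
      (by simp only [s]; rw [show μ₁ + μ₂ - μ₁ = μ₂ by ring]; linarith)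
    intro lam hlam
    rcases eq_or_lt_of_le hlam.2 with h | h
    · rw [h]; exact h2
    · have := hkey (s - lam) ⟨by simp only [s]; linarith, by simp only [s]; linarith [hlam.1]⟩
      simp only [s] at this
      rw [show μ₁ + μ₂ - (μ₁ + μ₂ - lam) = lam by ring] at this
      linarith
  refine ⟨fun lam hlam => ⟨hlower lam hlam, hupper lam hlam⟩, ?_⟩
  -- now f' ≤ -δ everywhere, so g = f + δ·id is antitone
  have hf' : ∀ x ∈ Set.Icc μ₁ μ₂, f' x ≤ -δ := fun x hx =>
    hVM x hx (abs_le.mpr ⟨hlower x hx, hupper x hx⟩)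
  set g : ℝ → ℝ := fun x => f x + δ * x with hg
  have hgd : ∀ x ∈ Set.Icc μ₁ μ₂, HasDerivAt g (f' x + δ) x := by
    intro x hx
    have h := (hdiff x hx).add ((hasDerivAt_id x).const_mul δ)
    simp only [mul_one, id] at h
    exact h
  have hanti : AntitoneOn g (Set.Icc μ₁ μ₂) := by
    apply antitoneOn_of_deriv_nonpos (convex_Icc μ₁ μ₂)
    · exact fun x hx => ((hgd x hx).continuousAt).continuousWithinAt
    · intro x hx
      rw [interior_Icc] at hx
      exact ((hgd x ⟨hx.1.le, hx.2.le⟩).differentiableAt).differentiableWithinAt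
    · intro x hx
      rw [interior_Icc] at hx
      have hxI : x ∈ Set.Icc μ₁ μ₂ := ⟨hx.1.le, hx.2.le⟩
      rw [(hgd x hxI).deriv]
      linarith [hf' x hxI]
  have := hanti (Set.left_mem_Icc.mpr hμ.le) (Set.right_mem_Icc.mpr hμ.le) hμ.le
  simp only [g] at this
  linarith
end

section
/- For each k ∈ ℕ define Tₖ : ℝ → ℝ by Tₖ(λ) = 1 for λ ≤ 0, Tₖ(λ) = 1 − kλ for 0 < λ < 2/k, and Tₖ(λ) = −1 for λ ≥ 2/k, and let T(λ) be the diagonal operator diag(T₁(λ), T₂(λ), …) on ℓ². Then: (a) for each x ∈ ℓ² \ {0}, the function λ ↦ ⟨T(λ)x, x⟩ = Σₖ Tₖ(λ)|xₖ|² satisfies Assumption (A3) (it is continuous, and if it vanishes at λ₀ it is positive for λ < λ₀ and negative for λ > λ₀); and (b) the spectrum of the operator function T, i.e. {λ ∈ ℝ : 0 ∈ σ(T(λ))}, equals {1/k : k ∈ ℕ}, consisting entirely of eigenvalues. -/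
/-- The piecewise linear functions of Remark 2.6(iii): `Tₖ(λ) = 1` for `λ ≤ 0`,
`1 − kλ` for `0 < λ < 2/k`, `−1` for `λ ≥ 2/k`.  Here the index `k : ℕ` encodes the
paper's `k + 1 ∈ {1, 2, 3, …}`. -/
noncomputable def Tfun (k : ℕ) (l : ℝ) : ℝ :=
  if l ≤ 0 then 1 else if l < 2 / (k + 1) then 1 - (k + 1) * l else -1

open ENNReal

lemma Tfun_eq (k : ℕ) (l : ℝ) :
    Tfun k l = max (-1) (min 1 (1 - (k + 1) * l)) := by
  have hk : (0:ℝ) < (k:ℝ) + 1 := by positivity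
  unfold Tfun
  split_ifs with h1 h2
  · rw [min_eq_left (by nlinarith), max_eq_right (by norm_num)]
  · push_neg at h1
    rw [lt_div_iff₀ hk] at h2
    rw [min_eq_right (by nlinarith), max_eq_right (by nlinarith)]
  · push_neg at h1 h2
    rw [div_le_iff₀ hk] at h2
    rw [min_eq_right (by nlinarith), max_eq_left (by nlinarith)]

lemma Tfun_cont (k : ℕ) : Continuous (Tfun k) := by
  have : Tfun k = fun l : ℝ => max (-1 : ℝ) (min 1 (1 - ((k : ℝ) + 1) * l)) := funext (Tfun_eq k)
  rw [this]; fun_prop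

lemma Tfun_anti (k : ℕ) : Antitone (Tfun k) := by
  intro a b hab
  rw [Tfun_eq, Tfun_eq]
  have hk : (0:ℝ) ≤ (k:ℝ) + 1 := by positivity
  exact max_le_max le_rfl (min_le_min le_rfl (by nlinarith))

lemma Tfun_abs_le (k : ℕ) (l : ℝ) : |Tfun k l| ≤ 1 := by
  rw [Tfun_eq, abs_le]
  exact ⟨le_max_left _ _, max_le (by norm_num) (min_le_left _ _)⟩

lemma Tfun_lt_of_lt {k : ℕ} {l l₀ : ℝ} (h0 : 0 < l₀) (h2 : l₀ < 2 / (k + 1))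
    (h : l < l₀) : Tfun k l₀ < Tfun k l := by
  have hk : (0:ℝ) < (k:ℝ) + 1 := by positivity
  rw [lt_div_iff₀ hk] at h2
  have hv₀ : Tfun k l₀ = 1 - (k + 1) * l₀ := by
    rw [Tfun_eq, min_eq_right (by nlinarith), max_eq_right (by nlinarith)]
  rw [Tfun_eq k l, hv₀]
  exact lt_of_lt_of_le (lt_min (by nlinarith) (by nlinarith)) (le_max_right _ _)

lemma Tfun_gt_of_gt {k : ℕ} {l l₀ : ℝ} (h0 : 0 < l₀) (h2 : l₀ < 2 / (k + 1))
    (h : l₀ < l) : Tfun k l < Tfun k l₀ := by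
  have hk : (0:ℝ) < (k:ℝ) + 1 := by positivity
  rw [lt_div_iff₀ hk] at h2
  have hv₀ : Tfun k l₀ = 1 - (k + 1) * l₀ := by
    rw [Tfun_eq, min_eq_right (by nlinarith), max_eq_right (by nlinarith)]
  rw [Tfun_eq k l, hv₀]
  exact max_lt (by nlinarith) (lt_of_le_of_lt (min_le_right _ _) (by nlinarith))

lemma Tfun_ne_zero {k : ℕ} {l : ℝ} (h : l ≠ 1 / (k + 1)) : Tfun k l ≠ 0 := by
  have hk : (0:ℝ) < (k:ℝ) + 1 := by positivity
  intro h0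
  rw [Tfun_eq] at h0
  rcases max_choice (-1 : ℝ) (min 1 (1 - (k + 1) * l)) with hc | hc <;> rw [hc] at h0
  · norm_num at h0
  · rcases min_choice (1:ℝ) (1 - (k + 1) * l) with hc2 | hc2 <;> rw [hc2] at h0
    · norm_num at h0
    · exact h (by field_simp; linarith)

lemma Tfun_eq_neg_one {k : ℕ} {l : ℝ} (h : 2 / (k + 1) ≤ l) : Tfun k l = -1 := by
  have hk : (0:ℝ) < (k:ℝ) + 1 := by positivity
  rw [div_le_iff₀ hk] at h
  rw [Tfun_eq, min_eq_right (by nlinarith), max_eq_left (by nlinarith)]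

lemma Tfun_eq_one {k : ℕ} {l : ℝ} (h : l ≤ 0) : Tfun k l = 1 := by
  unfold Tfun; rw [if_pos h]

open ENNReal
lemma exists_diagOp (c : ℕ → ℂ) (M : ℝ) (hM : ∀ k, ‖c k‖ ≤ M) :
    ∃ D : lp (fun _ : ℕ => ℂ) 2 →L[ℂ] lp (fun _ : ℕ => ℂ) 2,
      ∀ (x : lp (fun _ : ℕ => ℂ) 2) (k : ℕ), (D x) k = c k * x k := by
  have hM0 : 0 ≤ M := le_trans (norm_nonneg _) (hM 0)
  have htr : (2 : ℝ≥0∞).toReal = 2 := by norm_num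
  have hsq : ∀ (x : lp (fun _ : ℕ => ℂ) 2), Summable (fun k => ‖x k‖ ^ (2:ℝ)) := by
    intro x
    have := (lp.memℓp x).summable (p := 2) (by norm_num)
    simpa [htr] using this
  have hmem : ∀ x : lp (fun _ : ℕ => ℂ) 2, Memℓp (fun k => c k * x k) 2 := by
    intro x
    apply memℓp_gen
    rw [htr]
    apply Summable.of_nonneg_of_le (fun k => by positivity) (fun k => ?_)
      ((hsq x).mul_left (M ^ (2:ℝ)))
    rw [norm_mul, Real.mul_rpow (norm_nonneg _) (norm_nonneg _)]
    exact mul_le_mul_of_nonneg_right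
      (Real.rpow_le_rpow (norm_nonneg _) (hM k) (by norm_num))
      (Real.rpow_nonneg (norm_nonneg _) _)
  set D0 : lp (fun _ : ℕ => ℂ) 2 →ₗ[ℂ] lp (fun _ : ℕ => ℂ) 2 :=
    { toFun := fun x => ⟨fun k => c k * x k, hmem x⟩
      map_add' := fun x y => by
        apply lp.ext; funext k
        simp [lp.coeFn_add, mul_add]; rfl
      map_smul' := fun a x => by
        apply lp.ext; funext k
        simp [lp.coeFn_smul]
        ring } with hD0
  have happ : ∀ (x : lp (fun _ : ℕ => ℂ) 2) (k : ℕ), (D0 x) k = c k * x k := fun x k => rfl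
  have hbound : ∀ x, ‖D0 x‖ ≤ M * ‖x‖ := by
    intro x
    have h2 : (0:ℝ) < (2 : ℝ≥0∞).toReal := by norm_num
    have hn1 := lp.norm_rpow_eq_tsum h2 (D0 x)
    have hn2 := lp.norm_rpow_eq_tsum h2 x
    rw [htr] at hn1 hn2
    have key : ‖D0 x‖ ^ (2:ℝ) ≤ (M * ‖x‖) ^ (2:ℝ) := by
      rw [hn1, Real.mul_rpow hM0 (norm_nonneg _), hn2, ← tsum_mul_left]
      apply Summable.tsum_le_tsum _ _ ((hsq x).mul_left _)
      · intro k
        rw [happ, norm_mul, Real.mul_rpow (norm_nonneg _) (norm_nonneg _)]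
        exact mul_le_mul_of_nonneg_right
          (Real.rpow_le_rpow (norm_nonneg _) (hM k) (by norm_num))
          (Real.rpow_nonneg (norm_nonneg _) _)
      · have := hsq (D0 x)
        simpa [happ] using this
    rw [Real.rpow_two, Real.rpow_two] at key
    have ha := norm_nonneg (D0 x)
    have hb : 0 ≤ M * ‖x‖ := by positivity
    nlinarith [sq_nonneg (‖D0 x‖ - M * ‖x‖), sq_nonneg (‖D0 x‖ + M * ‖x‖)]
  exact ⟨D0.mkContinuous M hbound, fun x k => rfl⟩


/-- Remark 2.6(iii): let `T(λ) = diag(T₁(λ), T₂(λ), …)` on `ℓ²`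
(given as any family `Top` of bounded operators acting diagonally by the `Tfun k λ`).
(a) For each `x ∈ ℓ² \ {0}`, the function `λ ↦ ⟨T(λ)x, x⟩ = Σₖ Tₖ(λ)|xₖ|²` is
continuous and satisfies Assumption (A3).
(b) `{λ : 0 ∈ σ(T(λ))} = {1/k : k ∈ ℕ, k ≥ 1}`, and each such point is an
eigenvalue. -/
theorem stmt19 (Top : ℝ → (lp (fun _ : ℕ => ℂ) 2 →L[ℂ] lp (fun _ : ℕ => ℂ) 2))
    (hdiag : ∀ l : ℝ, ∀ x : lp (fun _ : ℕ => ℂ) 2, ∀ k : ℕ,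
      (Top l x) k = (Tfun k l : ℂ) * x k) :
    (∀ x : lp (fun _ : ℕ => ℂ) 2, x ≠ 0 →
      (Continuous fun l => (inner ℂ (Top l x) x : ℂ).re) ∧
      (∀ lam₀ : ℝ, (inner ℂ (Top lam₀ x) x : ℂ).re = 0 →
        ∀ lam : ℝ, (lam < lam₀ → 0 < (inner ℂ (Top lam x) x : ℂ).re) ∧
          (lam₀ < lam → (inner ℂ (Top lam x) x : ℂ).re < 0))) ∧
    (∀ l : ℝ,
      ((0 : ℂ) ∈ spectrum ℂ (Top l) ↔ ∃ k : ℕ, l = 1 / (k + 1)) ∧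
      ((0 : ℂ) ∈ spectrum ℂ (Top l) →
        ∃ x : lp (fun _ : ℕ => ℂ) 2, x ≠ 0 ∧ Top l x = 0)) := by
  have htr : (2 : ℝ≥0∞).toReal = 2 := by norm_num
  have hsq : ∀ (x : lp (fun _ : ℕ => ℂ) 2), Summable (fun k => ‖x k‖ ^ 2) := by
    intro x
    have := (lp.memℓp x).summable (p := 2) (by norm_num)
    rw [htr] at this
    simpa [Real.rpow_two] using this
  -- representation of the quadratic form
  have hrep : ∀ (l : ℝ) (x : lp (fun _ : ℕ => ℂ) 2),
      (inner ℂ (Top l x) x : ℂ).re = ∑' k, Tfun k l * ‖x k‖ ^ 2 := by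
    intro l x
    rw [lp.inner_eq_tsum, Complex.re_tsum (lp.summable_inner (Top l x) x)]
    congr 1; funext k
    rw [hdiag]
    simp only [RCLike.inner_apply, map_mul, Complex.conj_ofReal]
    rw [mul_left_comm, Complex.mul_conj']
    norm_cast
  have hsummul : ∀ (l : ℝ) (x : lp (fun _ : ℕ => ℂ) 2),
      Summable (fun k => Tfun k l * ‖x k‖ ^ 2) := by
    intro l x
    apply Summable.of_norm_bounded (hsq x)
    intro k
    rw [norm_mul, norm_pow, norm_norm]
    calc ‖Tfun k l‖ * ‖x k‖ ^ 2 ≤ 1 * ‖x k‖ ^ 2 := by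
          apply mul_le_mul_of_nonneg_right (Tfun_abs_le k l) (by positivity)
      _ = ‖x k‖ ^ 2 := one_mul _
  constructor
  · -- part (a)
    intro x hx
    have hx0 : ∃ k, x k ≠ 0 := by
      by_contra h
      push_neg at h
      exact hx (lp.ext (funext fun k => by simpa using h k))
    obtain ⟨k₀, hk₀⟩ := hx0
    have hk₀pos : 0 < ‖x k₀‖ ^ 2 := pow_pos (norm_pos_iff.mpr hk₀) 2
    have hapos : 0 < ∑' k, ‖x k‖ ^ 2 := Summable.tsum_pos (hsq x) (fun k => by positivity) k₀ hk₀pos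
    constructor
    · simp only [hrep]
      exact continuous_tsum (fun k => (Tfun_cont k).mul continuous_const) (hsq x)
        (fun k l => by
          rw [norm_mul, norm_pow, norm_norm]
          calc ‖Tfun k l‖ * ‖x k‖ ^ 2 ≤ 1 * ‖x k‖ ^ 2 :=
                mul_le_mul_of_nonneg_right (Tfun_abs_le k l) (by positivity)
            _ = ‖x k‖ ^ 2 := one_mul _)
    · intro lam₀ h0
      rw [hrep] at h0
      have hl0pos : 0 < lam₀ := by
        by_contra h
        push_neg at h
        rw [tsum_congr (fun k => by rw [Tfun_eq_one h, one_mul])] at h0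
        linarith
      have hksmall : ∃ k, 0 < ‖x k‖ ^ 2 ∧ lam₀ < 2 / (k + 1) := by
        by_contra h
        push_neg at h
        have hterm : ∀ k, Tfun k lam₀ * ‖x k‖ ^ 2 = -(‖x k‖ ^ 2) := by
          intro k
          rcases eq_or_lt_of_le (by positivity : (0:ℝ) ≤ ‖x k‖ ^ 2) with he | hp
          · rw [← he, mul_zero, neg_zero]
          · rw [Tfun_eq_neg_one (h k hp), neg_one_mul]
        rw [tsum_congr hterm, tsum_neg] at h0
        linarith
      obtain ⟨ks, haks, hks⟩ := hksmall
      intro lam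
      constructor
      · intro hlt
        have key : 0 < ∑' k, (Tfun k lam * ‖x k‖ ^ 2 - Tfun k lam₀ * ‖x k‖ ^ 2) := by
          apply Summable.tsum_pos ((hsummul lam x).sub (hsummul lam₀ x))
            (fun k => by
              have := Tfun_anti k hlt.le
              nlinarith [sq_nonneg ‖x k‖])
            ks
          have := Tfun_lt_of_lt hl0pos hks hlt
          nlinarith
        rw [Summable.tsum_sub (hsummul lam x) (hsummul lam₀ x), h0, sub_zero] at key
        rw [hrep]; exact key
      · intro hlt
        have key : 0 < ∑' k, (Tfun k lam₀ * ‖x k‖ ^ 2 - Tfun k lam * ‖x k‖ ^ 2) := by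
          apply Summable.tsum_pos ((hsummul lam₀ x).sub (hsummul lam x))
            (fun k => by
              have := Tfun_anti k hlt.le
              nlinarith [sq_nonneg ‖x k‖])
            ks
          have := Tfun_gt_of_gt hl0pos hks hlt
          nlinarith
        rw [Summable.tsum_sub (hsummul lam₀ x) (hsummul lam x), h0, zero_sub] at key
        rw [hrep]; linarith
  · -- part (b)
    have heig : ∀ (l : ℝ), (∃ k : ℕ, l = 1 / (k + 1)) →
        ∃ x : lp (fun _ : ℕ => ℂ) 2, x ≠ 0 ∧ Top l x = 0 := by
      intro l ⟨k, hl⟩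
      have hk : (0:ℝ) < (k:ℝ) + 1 := by positivity
      refine ⟨lp.single (E := fun _ : ℕ => ℂ) 2 k 1, ?_, ?_⟩
      · intro h
        have h1 : (lp.single (E := fun _ : ℕ => ℂ) 2 k 1) k = 0 := by rw [h]; simp
        rw [lp.single_apply_self] at h1
        exact one_ne_zero h1
      · apply lp.ext
        funext j
        rw [lp.coeFn_zero, Pi.zero_apply, hdiag]
        rcases eq_or_ne j k with rfl | hj
        · have hT : Tfun j l = 0 := by
            rw [Tfun_eq]
            have : 1 - ((j:ℝ) + 1) * l = 0 := by rw [hl]; field_simp; norm_num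
            rw [this]
            norm_num
          rw [hT]; simp
        · rw [lp.single_apply_ne _ _ _ hj, mul_zero]
    intro l
    have hunit : (∀ k : ℕ, l ≠ 1 / ((k : ℝ) + 1)) → IsUnit (Top l) := by
      intro hno
      have hδ : ∃ δ > 0, ∀ k, δ ≤ |Tfun k l| := by
        by_cases hl : l ≤ 0
        · exact ⟨1, one_pos, fun k => by rw [Tfun_eq_one hl]; norm_num⟩
        · push_neg at hl
          set N := Nat.ceil (2 / l) with hN
          set S := insert (1:ℝ) ((Finset.range N).image fun k => |Tfun k l|) with hS
          have hSne : S.Nonempty := ⟨1, Finset.mem_insert_self _ _⟩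
          refine ⟨S.min' hSne, ?_, ?_⟩
          · rcases Finset.mem_insert.mp (S.min'_mem hSne) with h1 | h1
            · rw [h1]; norm_num
            · obtain ⟨k, _, hk⟩ := Finset.mem_image.mp h1
              rw [← hk]
              exact abs_pos.mpr (Tfun_ne_zero (hno k))
          · intro k
            by_cases hkN : k < N
            · exact S.min'_le _ (Finset.mem_insert_of_mem
                (Finset.mem_image.mpr ⟨k, Finset.mem_range.mpr hkN, rfl⟩))
            · push_neg at hkN
              have h2 : 2 / ((k:ℝ) + 1) ≤ l := by
                rw [div_le_iff₀ (by positivity)]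
                have h1 : 2 / l ≤ (N : ℝ) := Nat.le_ceil _
                have h2' : (N : ℝ) ≤ (k : ℝ) := Nat.cast_le.mpr hkN
                have h3 : 2 / l ≤ (k : ℝ) + 1 := by linarith
                have h4 := (div_le_iff₀ hl).mp h3
                nlinarith
              rw [Tfun_eq_neg_one h2]
              have := S.min'_le 1 (Finset.mem_insert_self _ _)
              simpa using this
      obtain ⟨δ, hδpos, hδle⟩ := hδ
      have hTne : ∀ k, (Tfun k l : ℂ) ≠ 0 := fun k =>
        Complex.ofReal_ne_zero.mpr (Tfun_ne_zero (hno k))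
      obtain ⟨D, hD⟩ := exists_diagOp (fun k => ((Tfun k l : ℝ) : ℂ)⁻¹) δ⁻¹
        (fun k => by
          rw [norm_inv, Complex.norm_real]
          exact inv_anti₀ hδpos (hδle k))
      refine ⟨⟨Top l, D, ?_, ?_⟩, rfl⟩
      · apply ContinuousLinearMap.ext
        intro x
        apply lp.ext
        funext k
        rw [ContinuousLinearMap.mul_apply, ContinuousLinearMap.one_apply, hdiag, hD,
          ← mul_assoc, mul_inv_cancel₀ (hTne k), one_mul]
      · apply ContinuousLinearMap.ext
        intro x
        apply lp.ext
        funext k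
        rw [ContinuousLinearMap.mul_apply, ContinuousLinearMap.one_apply, hD, hdiag,
          ← mul_assoc, inv_mul_cancel₀ (hTne k), one_mul]
    have hfwd : (0 : ℂ) ∈ spectrum ℂ (Top l) → ∃ k : ℕ, l = 1 / (k + 1) := by
      intro hspec
      by_contra hno
      push_neg at hno
      rw [spectrum.zero_mem_iff] at hspec
      exact hspec (hunit hno)
    have hbwd : (∃ k : ℕ, l = 1 / (k + 1)) → (0 : ℂ) ∈ spectrum ℂ (Top l) := by
      intro hex
      obtain ⟨x, hx0, hx⟩ := heig l hex
      rw [spectrum.zero_mem_iff]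
      intro hu
      obtain ⟨u, hu⟩ := hu
      apply hx0
      have h1 : (↑u⁻¹ * (u : lp (fun _ : ℕ => ℂ) 2 →L[ℂ] lp (fun _ : ℕ => ℂ) 2)) x = x := by
        rw [u.inv_mul]; rfl
      rw [ContinuousLinearMap.mul_apply, hu, hx, map_zero] at h1
      exact h1.symm
    exact ⟨⟨hfwd, hbwd⟩, fun hs => heig l (hfwd hs)⟩
end
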